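/- arXiv:1904.03565 — 2 statements merged into one kernel-verified Lean document; each statement's English description precedes it below -/
import Mathlib

section
/- Let k be a field, B = kQ/I a bound quiver algebra, F a set of new arrows with no relative cycles, and Y a finite-dimensional B_F-bimodule. Then the map H_1(B, Y) → H_1(B_F, Y) on first Hochschild homology induced by the inclusion B ⊆ B_F (restricting Y to a B-bimodule) is injective. -/
/-
  Formalization of statements from:
  "The first Hochschild (co)homology when adding arrows to a bound quiver algebra"
  by C. Cibils, M. Lanzilotta, E. N. Marcos, S. Schroll, A. Solotar.
-/

set_option linter.unusedSectionVars false
set_option linter.unusedVariables false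
set_option maxSynthPendingDepth 3

open CategoryTheory

noncomputable section

namespace QP

open MulOpposite

/-- The defining relations of the path algebra of the quiver with vertex set `V`,
arrow set `E`, source map `s` and target map `t`, as a quotient of the free algebra
on `V ⊕ E`: the vertices form a complete set of orthogonal idempotents and each arrow `a`
satisfies `t(a)·a = a = a·s(a)`. -/
inductive PRel (k V E : Type) [CommRing k] [Fintype V] [DecidableEq V] (s t : E → V) :
    FreeAlgebra k (V ⊕ E) → FreeAlgebra k (V ⊕ E) → Prop
  | idem (i j : V) : PRel k V E s t
      (FreeAlgebra.ι k (Sum.inl i) * FreeAlgebra.ι k (Sum.inl j))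
      (if i = j then FreeAlgebra.ι k (Sum.inl i) else 0)
  | unit : PRel k V E s t (∑ i : V, FreeAlgebra.ι k (Sum.inl i)) 1
  | arrow_left (a : E) : PRel k V E s t
      (FreeAlgebra.ι k (Sum.inl (t a)) * FreeAlgebra.ι k (Sum.inr a))
      (FreeAlgebra.ι k (Sum.inr a))
  | arrow_right (a : E) : PRel k V E s t
      (FreeAlgebra.ι k (Sum.inr a) * FreeAlgebra.ι k (Sum.inl (s a)))
      (FreeAlgebra.ι k (Sum.inr a))

/-- The path algebra `kQ` of the finite quiver `Q = (V, E, s, t)`. -/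
abbrev PathAlg (k V E : Type) [CommRing k] [Fintype V] [DecidableEq V] (s t : E → V) : Type :=
  RingQuot (PRel k V E s t)

variable (k : Type) [CommRing k]
variable {V E : Type} [Fintype V] [DecidableEq V]

/-- The vertex `i`, as an element of the path algebra (an idempotent). -/
def vtx (s t : E → V) (i : V) : PathAlg k V E s t :=
  RingQuot.mkAlgHom k (PRel k V E s t) (FreeAlgebra.ι k (Sum.inl i))

/-- The arrow `a`, as an element of the path algebra. -/
def arr (s t : E → V) (a : E) : PathAlg k V E s t :=
  RingQuot.mkAlgHom k (PRel k V E s t) (FreeAlgebra.ι k (Sum.inr a))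

/-- A list of arrows `[aₙ, ..., a₁]` is composable when `s aᵢ₊₁ = t aᵢ` for all `i`. -/
def Composable (s t : E → V) : List E → Prop :=
  List.Chain' (fun p q => s p = t q)

/-- The product `aₙ ⋯ a₁` in the path algebra of a list of arrows `[aₙ, ..., a₁]`;
for a composable list this is the corresponding path. -/
def pathProd (s t : E → V) (l : List E) : PathAlg k V E s t :=
  (l.map (arr k s t)).prod

/-- The two-sided ideal of the path algebra generated by the paths of length `m`. -/
def pathsIdeal (s t : E → V) (m : ℕ) : TwoSidedIdeal (PathAlg k V E s t) :=
  TwoSidedIdeal.span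
    {x | ∃ l : List E, l.length = m ∧ Composable s t l ∧ x = pathProd k s t l}

/-- A two-sided ideal `I` of the path algebra is admissible when
`⟨Q_n⟩ ⊆ I ⊆ ⟨Q_2⟩` for some `n ≥ 2`. -/
def IsAdmissible (s t : E → V) (I : TwoSidedIdeal (PathAlg k V E s t)) : Prop :=
  ∃ n : ℕ, 2 ≤ n ∧ pathsIdeal k s t n ≤ I ∧ I ≤ pathsIdeal k s t 2

/-- The bound quiver algebra `kQ/I`. -/
abbrev BQA (s t : E → V) (I : TwoSidedIdeal (PathAlg k V E s t)) : Type :=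
  RingQuot (fun x y : PathAlg k V E s t => x - y ∈ I)

/-- The quotient map `kQ → kQ/I`. -/
def bqaMk (s t : E → V) (I : TwoSidedIdeal (PathAlg k V E s t)) :
    PathAlg k V E s t →ₐ[k] BQA k s t I :=
  RingQuot.mkAlgHom k _

/-- The image of a vertex in the bound quiver algebra. -/
def bv (s t : E → V) (I : TwoSidedIdeal (PathAlg k V E s t)) (i : V) : BQA k s t I :=
  bqaMk k s t I (vtx k s t i)

/-- The subspace `e·A·f` of an algebra `A`, for elements `e f : A`
(typically idempotents). -/
def corner (A : Type) [Ring A] [Algebra k A] (e f : A) : Submodule k A :=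
  Submodule.span k {x | ∃ c : A, x = e * c * f}

/-- `yBx ≠ 0`, for vertices `y x` of the quiver of the bound quiver algebra `B = kQ/I`. -/
def cornerNZ (s t : E → V) (I : TwoSidedIdeal (PathAlg k V E s t)) (y x : V) : Prop :=
  corner k (BQA k s t I) (bv k s t I y) (bv k s t I x) ≠ ⊥

section NewArrows

variable (s t : E → V) {F : Type} [Fintype F] (sF tF : F → V)
variable (I : TwoSidedIdeal (PathAlg k V E s t))

/-- A relative path `(aₙ, ..., a₁)` (recorded as the list `[aₙ, ..., a₁]` of new arrows):
a nonempty sequence of new arrows such that `s(aᵢ₊₁)·B·t(aᵢ) ≠ 0` for all `i`. -/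
def IsRelPath (l : List F) : Prop :=
  l ≠ [] ∧ l.Chain' (fun p q => cornerNZ k s t I (sF p) (tF q))

/-- The source of a relative path: the source of its first arrow `a₁`. -/
def relSource (l : List F) (h : l ≠ []) : V := sF (l.getLast h)

/-- The target of a relative path: the target of its last arrow `aₙ`. -/
def relTarget (l : List F) (h : l ≠ []) : V := tF (l.head h)

/-- The dimension of a relative path `γ = (aₙ, ..., a₁)`:
`∏ᵢ dim_k s(aᵢ₊₁)·B·t(aᵢ)`. -/
def relDim (l : List F) : ℕ :=
  ((l.zip l.tail).map fun pq =>
    Module.finrank k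
      (corner k (BQA k s t I) (bv k s t I (sF pq.1)) (bv k s t I (tF pq.2)))).prod

/-- A relative cycle: a relative path `γ` with `s(γ)·B·t(γ) ≠ 0`. -/
def IsRelCycle (l : List F) : Prop :=
  ∃ h : IsRelPath k s t sF tF I l,
    cornerNZ k s t I (relSource sF l h.1) (relTarget tF l h.1)

/-- There are no relative cycles. -/
def NoRelCycles : Prop := ∀ l : List F, ¬ IsRelCycle k s t sF tF I l

/-- The type of relative paths. -/
def RelPathT : Type := {l : List F // IsRelPath k s t sF tF I l}

/-- An extended relative path: either a pair of vertices `(y, x)` with `yBx ≠ 0`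
(length 0, recorded as `(y, [], x)`), or a triple `(y, γ, x)` with `γ` a relative path,
`y·B·t(γ) ≠ 0` and `s(γ)·B·x ≠ 0`. -/
def IsExtRelPath : V × List F × V → Prop
  | (y, [], x) => cornerNZ k s t I y x
  | (y, a :: l, x) =>
      IsRelPath k s t sF tF I (a :: l) ∧
      cornerNZ k s t I y (relTarget tF (a :: l) (List.cons_ne_nil a l)) ∧
      cornerNZ k s t I (relSource sF (a :: l) (List.cons_ne_nil a l)) x

/-- The dimension of an extended relative path. -/
def extDim : V × List F × V → ℕ
  | (y, [], x) => Module.finrank k (corner k (BQA k s t I) (bv k s t I y) (bv k s t I x))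
  | (y, a :: l, x) =>
      Module.finrank k (corner k (BQA k s t I) (bv k s t I y)
          (bv k s t I (relTarget tF (a :: l) (List.cons_ne_nil a l)))) *
        relDim k s t sF tF I (a :: l) *
        Module.finrank k (corner k (BQA k s t I)
          (bv k s t I (relSource sF (a :: l) (List.cons_ne_nil a l))) (bv k s t I x))

/-- The source of an extended relative path `(y, γ, x)` is `x`. -/
def extSource (w : V × List F × V) : V := w.2.2

/-- The target of an extended relative path `(y, γ, x)` is `y`. -/
def extTarget (w : V × List F × V) : V := w.1

/-- The set `F ∥ W⋆` of pairs `(a, ω)` of a new arrow `a` and an extended relative path `ω`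
which is parallel to `a`, i.e. `s(a) = s(ω)` and `t(a) = t(ω)`. -/
def FparW : Type :=
  {p : F × (V × List F × V) //
    IsExtRelPath k s t sF tF I p.2 ∧ sF p.1 = extSource p.2 ∧ tF p.1 = extTarget p.2}

/-- The quiver `Q_F` obtained by adding the new arrows `F` has arrow set `E ⊕ F`,
source map `Sum.elim s sF` and target map `Sum.elim t tF`.  This is the canonical
algebra morphism `kQ → kQ_F`. -/
def extendPath : PathAlg k V E s t →ₐ[k] PathAlg k V (E ⊕ F) (Sum.elim s sF) (Sum.elim t tF) :=
  RingQuot.liftAlgHom k ⟨FreeAlgebra.lift k (fun x => match x with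
      | Sum.inl i => RingQuot.mkAlgHom k (PRel k V (E ⊕ F) (Sum.elim s sF) (Sum.elim t tF))
          (FreeAlgebra.ι k (Sum.inl i))
      | Sum.inr a => RingQuot.mkAlgHom k (PRel k V (E ⊕ F) (Sum.elim s sF) (Sum.elim t tF))
          (FreeAlgebra.ι k (Sum.inr (Sum.inl a)))), by
    intro x y h
    induction h with
    | idem i j =>
        have h2 := RingQuot.mkAlgHom_rel k
          (PRel.idem (k := k) (s := Sum.elim s sF) (t := Sum.elim t tF) i j)
        simp only [map_mul, apply_ite, map_zero, FreeAlgebra.lift_ι_apply] at h2 ⊢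
        exact h2
    | unit =>
        have h2 := RingQuot.mkAlgHom_rel k
          (PRel.unit (k := k) (V := V) (E := E ⊕ F) (s := Sum.elim s sF) (t := Sum.elim t tF))
        simp only [map_sum, map_one, FreeAlgebra.lift_ι_apply] at h2 ⊢
        exact h2
    | arrow_left a =>
        have h2 := RingQuot.mkAlgHom_rel k
          (PRel.arrow_left (k := k) (s := Sum.elim s sF) (t := Sum.elim t tF) (Sum.inl a))
        simp only [map_mul, FreeAlgebra.lift_ι_apply, Sum.elim_inl] at h2 ⊢
        exact h2
    | arrow_right a =>
        have h2 := RingQuot.mkAlgHom_rel k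
          (PRel.arrow_right (k := k) (s := Sum.elim s sF) (t := Sum.elim t tF) (Sum.inl a))
        simp only [map_mul, FreeAlgebra.lift_ι_apply, Sum.elim_inl] at h2 ⊢
        exact h2⟩

/-- The two-sided ideal `⟨I⟩` of `kQ_F` generated by (the image of) `I`. -/
def idealF : TwoSidedIdeal (PathAlg k V (E ⊕ F) (Sum.elim s sF) (Sum.elim t tF)) :=
  TwoSidedIdeal.span (extendPath k s t sF tF '' (I : Set (PathAlg k V E s t)))

/-- The algebra `B_F = kQ_F/⟨I⟩`. -/
abbrev BQAF : Type := BQA k (Sum.elim s sF) (Sum.elim t tF) (idealF k s t sF tF I)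

/-- The canonical inclusion `B = kQ/I → B_F = kQ_F/⟨I⟩`. -/
def inclBF : BQA k s t I →ₐ[k] BQAF k s t sF tF I :=
  RingQuot.liftAlgHom k
    ⟨(bqaMk k (Sum.elim s sF) (Sum.elim t tF) (idealF k s t sF tF I)).comp
        (extendPath k s t sF tF), by
      intro x y h
      exact RingQuot.mkAlgHom_rel k (by
        show _ - _ ∈ idealF k s t sF tF I
        rw [← map_sub]
        exact TwoSidedIdeal.subset_span ⟨x - y, h, rfl⟩)⟩

end NewArrows

end QP

namespace HHlow

open scoped TensorProduct
open TensorProduct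

section Homology

variable (k : Type) [CommRing k]
variable (A : Type) [Ring A] [Algebra k A]
variable (Y : Type) [AddCommGroup Y] [Module k Y]
  [Module A Y] [Module Aᵐᵒᵖ Y]
  [SMulCommClass k A Y] [SMulCommClass k Aᵐᵒᵖ Y]
  [IsScalarTower k A Y] [IsScalarTower k Aᵐᵒᵖ Y]
  [SMulCommClass A Aᵐᵒᵖ Y]
variable {B : Type} [Ring B] [Algebra k B]

/-- The Hochschild boundary `b₁ : Y ⊗ B → Y`, `y ⊗ b ↦ y·b - b·y`, where `B` acts on the
`A`-bimodule `Y` through the algebra morphism `f : B →ₐ[k] A`. -/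
noncomputable def hb1 (f : B →ₐ[k] A) : Y ⊗[k] B →ₗ[k] Y :=
  TensorProduct.lift (LinearMap.mk₂ k
    (fun y b => MulOpposite.op (f b) • y - f b • y)
    (by intro y z b; simp only [smul_add]; abel)
    (by intro c y b; simp only [smul_sub, smul_comm c])
    (by intro y b b'; simp only [map_add, MulOpposite.op_add, add_smul]; abel)
    (by intro c y b; simp only [map_smul, MulOpposite.op_smul, smul_assoc, smul_sub]))

lemma hb1_tmul (f : B →ₐ[k] A) (y : Y) (b : B) :
    hb1 k A Y f (y ⊗ₜ[k] b) = MulOpposite.op (f b) • y - f b • y := by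
  simp [hb1]

/-- The Hochschild boundary `b₂ : (Y ⊗ B) ⊗ B → Y ⊗ B`,
`(y ⊗ b) ⊗ b' ↦ (y·b) ⊗ b' - y ⊗ (b·b') + (b'·y) ⊗ b`. -/
noncomputable def hb2 (f : B →ₐ[k] A) : (Y ⊗[k] B) ⊗[k] B →ₗ[k] Y ⊗[k] B :=
  TensorProduct.lift (TensorProduct.lift
    { toFun := fun y => LinearMap.mk₂ k
        (fun b b' => (MulOpposite.op (f b) • y) ⊗ₜ[k] b' - y ⊗ₜ[k] (b * b')
          + (f b' • y) ⊗ₜ[k] b)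
        (by
          intro b c b'
          simp only [map_add, MulOpposite.op_add, add_smul, add_tmul, add_mul, tmul_add]
          abel)
        (by
          intro c b b'
          simp only [map_smul, MulOpposite.op_smul, smul_assoc, smul_tmul', tmul_smul,
            smul_mul_assoc, smul_sub, smul_add])
        (by
          intro b b' c'
          simp only [map_add, add_smul, add_tmul, mul_add, tmul_add]
          abel)
        (by
          intro c b b'
          simp only [map_smul, smul_assoc, smul_tmul', tmul_smul, mul_smul_comm,
            smul_sub, smul_add])
      map_add' := by
        intro y z
        ext b b'
        simp only [LinearMap.mk₂_apply, LinearMap.add_apply, LinearMap.coe_mk, AddHom.coe_mk,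
          smul_add, add_tmul, tmul_add]
        abel
      map_smul' := by
        intro c y
        ext b b'
        simp only [LinearMap.mk₂_apply, LinearMap.smul_apply, RingHom.id_apply,
          LinearMap.coe_mk, AddHom.coe_mk, smul_sub, smul_add, smul_tmul',
          smul_comm c] })

lemma hb2_tmul (f : B →ₐ[k] A) (y : Y) (b b' : B) :
    hb2 k A Y f ((y ⊗ₜ[k] b) ⊗ₜ[k] b') =
      (MulOpposite.op (f b) • y) ⊗ₜ[k] b' - y ⊗ₜ[k] (b * b') + (f b' • y) ⊗ₜ[k] b := by
  simp [hb2]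

/-- The first Hochschild homology `H_1(B, Y)` of `B` with coefficients in the `A`-bimodule
`Y`, `B` acting through `f : B →ₐ[k] A`: the homology of
`Y ⊗ B ⊗ B → Y ⊗ B → Y` at `Y ⊗ B`. -/
noncomputable def H1h (f : B →ₐ[k] A) :=
  LinearMap.ker (hb1 k A Y f) ⧸
    (LinearMap.range (hb2 k A Y f)).comap (LinearMap.ker (hb1 k A Y f)).subtype

noncomputable instance (f : B →ₐ[k] A) : AddCommGroup (H1h k A Y f) :=
  inferInstanceAs (AddCommGroup (_ ⧸ _))

noncomputable instance (f : B →ₐ[k] A) : Module k (H1h k A Y f) :=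
  inferInstanceAs (Module k (_ ⧸ _))

end Homology

section Functorial

variable (k : Type) [CommRing k]
variable (A : Type) [Ring A] [Algebra k A]
variable (Y : Type) [AddCommGroup Y] [Module k Y]
  [Module A Y] [Module Aᵐᵒᵖ Y]
  [SMulCommClass k A Y] [SMulCommClass k Aᵐᵒᵖ Y]
  [IsScalarTower k A Y] [IsScalarTower k Aᵐᵒᵖ Y]
  [SMulCommClass A Aᵐᵒᵖ Y]
variable (A' : Type) [Ring A'] [Algebra k A']
variable (Y' : Type) [AddCommGroup Y'] [Module k Y']
  [Module A' Y'] [Module A'ᵐᵒᵖ Y']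
  [SMulCommClass k A' Y'] [SMulCommClass k A'ᵐᵒᵖ Y']
  [IsScalarTower k A' Y'] [IsScalarTower k A'ᵐᵒᵖ Y']
  [SMulCommClass A' A'ᵐᵒᵖ Y']
variable {B B' : Type} [Ring B] [Algebra k B] [Ring B'] [Algebra k B']
variable (f : B →ₐ[k] A) (f' : B' →ₐ[k] A') (g : B →ₐ[k] B') (u : Y →ₗ[k] Y')

/-- The chain map `Y ⊗ B → Y' ⊗ B'` induced by `g` and `u`. -/
noncomputable def chain1 : Y ⊗[k] B →ₗ[k] Y' ⊗[k] B' :=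
  TensorProduct.map u (g.toLinearMap : B →ₗ[k] B')

lemma chain1_comm
    (hl : ∀ (b : B) (y : Y), u (f b • y) = f' (g b) • u y)
    (hr : ∀ (b : B) (y : Y), u (MulOpposite.op (f b) • y) = MulOpposite.op (f' (g b)) • u y) :
    (hb1 k A' Y' f').comp (chain1 k Y Y' g u) = u.comp (hb1 k A Y f) := by
  apply TensorProduct.ext'
  intro y b
  simp [chain1, hb1_tmul, map_sub, hl, hr]

lemma chain2_comm
    (hl : ∀ (b : B) (y : Y), u (f b • y) = f' (g b) • u y)
    (hr : ∀ (b : B) (y : Y), u (MulOpposite.op (f b) • y) = MulOpposite.op (f' (g b)) • u y) :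
    (chain1 k Y Y' g u).comp (hb2 k A Y f) =
      (hb2 k A' Y' f').comp (TensorProduct.map (chain1 k Y Y' g u) g.toLinearMap) := by
  apply TensorProduct.ext'
  intro x b'
  induction x using TensorProduct.induction_on with
  | zero => simp
  | tmul y b =>
      simp only [LinearMap.comp_apply, TensorProduct.map_tmul, hb2_tmul, chain1, map_sub,
        map_add, TensorProduct.map_tmul, AlgHom.toLinearMap_apply, map_mul, hl, hr]
  | add v w hv hw =>
      simp only [TensorProduct.add_tmul, map_add] at *
      rw [hv, hw]

/-- The map `H_1(B, Y) → H_1(B', Y')` induced by the compatible pair `(g, u)`. -/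
noncomputable def H1hMap
    (hl : ∀ (b : B) (y : Y), u (f b • y) = f' (g b) • u y)
    (hr : ∀ (b : B) (y : Y), u (MulOpposite.op (f b) • y) = MulOpposite.op (f' (g b)) • u y) :
    H1h k A Y f →ₗ[k] H1h k A' Y' f' :=
  Submodule.mapQ _ _
    ((chain1 k Y Y' g u).restrict (p := LinearMap.ker (hb1 k A Y f))
      (q := LinearMap.ker (hb1 k A' Y' f')) (by
        intro x hx
        have h := LinearMap.congr_fun (chain1_comm k A Y A' Y' f f' g u hl hr) x
        simp only [LinearMap.comp_apply] at h
        simp only [LinearMap.mem_ker] at hx ⊢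
        rw [h, hx, map_zero]))
    (by
      rintro ⟨x, hx⟩ ⟨z, hz⟩
      refine ⟨TensorProduct.map (chain1 k Y Y' g u) g.toLinearMap z, ?_⟩
      have h := LinearMap.congr_fun (chain2_comm k A Y A' Y' f f' g u hl hr) z
      simp only [LinearMap.comp_apply] at h
      rw [← h, hz]
      rfl)

end Functorial

end HHlow

section AuxProof

namespace QPAux

open QP MulOpposite
open scoped TensorProduct

lemma mapQ_inj {R M N : Type*} [Ring R] [AddCommGroup M] [Module R M]
    [AddCommGroup N] [Module R N]
    (p : Submodule R M) (q : Submodule R N) (f : M →ₗ[R] N) (h : p ≤ Submodule.comap f q)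
    (hc : ∀ x : M, f x ∈ q → x ∈ p) : Function.Injective (p.mapQ q f h) := by
  rw [← LinearMap.ker_eq_bot, Submodule.eq_bot_iff]
  intro u hu
  obtain ⟨x, rfl⟩ := Submodule.Quotient.mk_surjective _ u
  rw [LinearMap.mem_ker, Submodule.mapQ_apply, Submodule.Quotient.mk_eq_zero] at hu
  rw [Submodule.Quotient.mk_eq_zero]
  exact hc x hu

variable (k : Type) [Field k]

section GenericBQA

variable {V' E' : Type} [Fintype V'] [DecidableEq V'] (s' t' : E' → V')
variable (J : TwoSidedIdeal (QP.PathAlg k V' E' s' t'))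

/-- The image of an arrow in the bound quiver algebra. -/
def barr (a : E') : QP.BQA k s' t' J :=
  QP.bqaMk k s' t' J (QP.arr k s' t' a)

lemma vtx_mul_vtx (i j : V') :
    QP.vtx k s' t' i * QP.vtx k s' t' j = if i = j then QP.vtx k s' t' i else 0 := by
  have h := RingQuot.mkAlgHom_rel k (QP.PRel.idem (k := k) (s := s') (t := t') i j)
  unfold QP.vtx
  rw [← map_mul, h]
  split_ifs <;> simp

lemma bv_mul_bv (i j : V') :
    QP.bv k s' t' J i * QP.bv k s' t' J j = if i = j then QP.bv k s' t' J i else 0 := by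
  unfold QP.bv
  rw [← map_mul, vtx_mul_vtx]
  split_ifs <;> simp

lemma sum_bv : (∑ i : V', QP.bv k s' t' J i) = 1 := by
  have h := RingQuot.mkAlgHom_rel k
    (QP.PRel.unit (k := k) (V := V') (E := E') (s := s') (t := t'))
  unfold QP.bv QP.vtx
  rw [← map_sum, ← map_sum, h, map_one, map_one]

lemma bv_mul_barr (a : E') :
    QP.bv k s' t' J (t' a) * barr k s' t' J a = barr k s' t' J a := by
  have h := RingQuot.mkAlgHom_rel k (QP.PRel.arrow_left (k := k) (s := s') (t := t') a)
  unfold QP.bv barr QP.vtx QP.arr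
  simp only [← map_mul]
  rw [h]

lemma barr_mul_bv (a : E') :
    barr k s' t' J a * QP.bv k s' t' J (s' a) = barr k s' t' J a := by
  have h := RingQuot.mkAlgHom_rel k (QP.PRel.arrow_right (k := k) (s := s') (t := t') a)
  unfold QP.bv barr QP.vtx QP.arr
  simp only [← map_mul]
  rw [h]

lemma bqaMk_eq_zero_of_mem {x : QP.PathAlg k V' E' s' t'} (hx : x ∈ J) :
    QP.bqaMk k s' t' J x = 0 := by
  have h : QP.bqaMk k s' t' J x = QP.bqaMk k s' t' J 0 :=
    RingQuot.mkAlgHom_rel k (by simpa using hx)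
  simpa using h

/-- Extensionality for algebra maps out of a bound quiver algebra. -/
lemma bqa_algHom_ext {T' : Type} [Semiring T'] [Algebra k T']
    {φ ψ : QP.BQA k s' t' J →ₐ[k] T'}
    (hv : ∀ v : V', φ (QP.bv k s' t' J v) = ψ (QP.bv k s' t' J v))
    (ha : ∀ a : E', φ (barr k s' t' J a) = ψ (barr k s' t' J a)) : φ = ψ := by
  apply RingQuot.ringQuot_ext'
  apply RingQuot.ringQuot_ext'
  apply FreeAlgebra.hom_ext
  funext g
  rcases g with v | a
  · exact hv v
  · exact ha a

end GenericBQA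

section Specific

variable {V E : Type} [Fintype V] [DecidableEq V] [Fintype E] (s t : E → V)
variable {F : Type} [Fintype F] (sF tF : F → V)
variable (I : TwoSidedIdeal (QP.PathAlg k V E s t))

lemma inclBF_bv (v : V) :
    QP.inclBF k s t sF tF I (QP.bv k s t I v)
      = QP.bv k (Sum.elim s sF) (Sum.elim t tF) (QP.idealF k s t sF tF I) v := by
  unfold QP.inclBF QP.bv QP.bqaMk QP.vtx
  erw [RingQuot.liftAlgHom_mkAlgHom_apply]
  simp only [AlgHom.comp_apply]
  unfold QP.extendPath
  rw [RingQuot.liftAlgHom_mkAlgHom_apply, FreeAlgebra.lift_ι_apply]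

lemma inclBF_barr (a : E) :
    QP.inclBF k s t sF tF I (barr k s t I a)
      = barr k (Sum.elim s sF) (Sum.elim t tF) (QP.idealF k s t sF tF I) (Sum.inl a) := by
  unfold QP.inclBF barr QP.bqaMk QP.arr
  erw [RingQuot.liftAlgHom_mkAlgHom_apply]
  simp only [AlgHom.comp_apply]
  unfold QP.extendPath
  rw [RingQuot.liftAlgHom_mkAlgHom_apply, FreeAlgebra.lift_ι_apply]


section DualMod

variable (Y : Type) [AddCommGroup Y] [Module k Y]
    [Module (QP.BQAF k s t sF tF I) Y] [Module (QP.BQAF k s t sF tF I)ᵐᵒᵖ Y]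
    [SMulCommClass k (QP.BQAF k s t sF tF I) Y]
    [SMulCommClass k (QP.BQAF k s t sF tF I)ᵐᵒᵖ Y]
    [IsScalarTower k (QP.BQAF k s t sF tF I) Y]
    [IsScalarTower k (QP.BQAF k s t sF tF I)ᵐᵒᵖ Y]
    [SMulCommClass (QP.BQAF k s t sF tF I) (QP.BQAF k s t sF tF I)ᵐᵒᵖ Y]

/-- Right action of `B_F` on `Y`, as a `k`-linear map. -/
def rAct (c : QP.BQAF k s t sF tF I) : Y →ₗ[k] Y where
  toFun y := MulOpposite.op c • y
  map_add' y y' := smul_add _ y y'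
  map_smul' a y := (smul_comm a (MulOpposite.op c) y).symm

/-- Left action of `B_F` on `Y`, as a `k`-linear map. -/
def lAct (c : QP.BQAF k s t sF tF I) : Y →ₗ[k] Y where
  toFun y := c • y
  map_add' y y' := smul_add _ y y'
  map_smul' a y := (smul_comm a c y).symm

instance instWSMul : SMul (QP.BQAF k s t sF tF I) (Y →ₗ[k] k) :=
  ⟨fun c ξ => ξ.comp (rAct k s t sF tF I Y c)⟩

instance instWSMulOp : SMul (QP.BQAF k s t sF tF I)ᵐᵒᵖ (Y →ₗ[k] k) :=
  ⟨fun oc ξ => ξ.comp (lAct k s t sF tF I Y (MulOpposite.unop oc))⟩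

lemma wsmul_apply (c : QP.BQAF k s t sF tF I) (ξ : Y →ₗ[k] k) (y : Y) :
    (c • ξ) y = ξ (MulOpposite.op c • y) := rfl

lemma wopsmul_apply (oc : (QP.BQAF k s t sF tF I)ᵐᵒᵖ) (ξ : Y →ₗ[k] k) (y : Y) :
    (oc • ξ) y = ξ (MulOpposite.unop oc • y) := rfl

instance instWModule : Module (QP.BQAF k s t sF tF I) (Y →ₗ[k] k) where
  one_smul ξ := LinearMap.ext fun y => by
    rw [wsmul_apply, MulOpposite.op_one, one_smul]
  mul_smul c c' ξ := LinearMap.ext fun y => by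
    rw [wsmul_apply, wsmul_apply, wsmul_apply, MulOpposite.op_mul, mul_smul]
  smul_zero c := LinearMap.ext fun y => rfl
  smul_add c ξ ξ' := LinearMap.ext fun y => rfl
  add_smul c c' ξ := LinearMap.ext fun y => by
    rw [LinearMap.add_apply, wsmul_apply, wsmul_apply, wsmul_apply, MulOpposite.op_add,
      add_smul, map_add]
  zero_smul ξ := LinearMap.ext fun y => by
    rw [wsmul_apply, MulOpposite.op_zero, zero_smul, map_zero, LinearMap.zero_apply]

instance instWModuleOp : Module (QP.BQAF k s t sF tF I)ᵐᵒᵖ (Y →ₗ[k] k) where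
  one_smul ξ := LinearMap.ext fun y => by
    rw [wopsmul_apply, MulOpposite.unop_one, one_smul]
  mul_smul oc oc' ξ := LinearMap.ext fun y => by
    rw [wopsmul_apply, wopsmul_apply, wopsmul_apply, MulOpposite.unop_mul, mul_smul]
  smul_zero oc := LinearMap.ext fun y => rfl
  smul_add oc ξ ξ' := LinearMap.ext fun y => rfl
  add_smul oc oc' ξ := LinearMap.ext fun y => by
    rw [LinearMap.add_apply, wopsmul_apply, wopsmul_apply, wopsmul_apply,
      MulOpposite.unop_add, add_smul, map_add]
  zero_smul ξ := LinearMap.ext fun y => by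
    rw [wopsmul_apply, MulOpposite.unop_zero, zero_smul, map_zero, LinearMap.zero_apply]

instance instWSCC : SMulCommClass (QP.BQAF k s t sF tF I) (QP.BQAF k s t sF tF I)ᵐᵒᵖ
    (Y →ₗ[k] k) where
  smul_comm c oc ξ := LinearMap.ext fun y => by
    rw [wsmul_apply, wopsmul_apply, wopsmul_apply, wsmul_apply]
    rw [smul_comm]

instance instWSCC' : SMulCommClass (QP.BQAF k s t sF tF I)ᵐᵒᵖ (QP.BQAF k s t sF tF I)
    (Y →ₗ[k] k) :=
  SMulCommClass.symm _ _ _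

instance instWTower : IsScalarTower k (QP.BQAF k s t sF tF I) (Y →ₗ[k] k) where
  smul_assoc a c ξ := LinearMap.ext fun y => by
    rw [wsmul_apply, LinearMap.smul_apply, wsmul_apply, MulOpposite.op_smul, smul_assoc,
      map_smul]

instance instWTowerOp : IsScalarTower k (QP.BQAF k s t sF tF I)ᵐᵒᵖ (Y →ₗ[k] k) where
  smul_assoc a oc ξ := LinearMap.ext fun y => by
    rw [wopsmul_apply, LinearMap.smul_apply, wopsmul_apply, MulOpposite.unop_smul, smul_assoc,
      map_smul]

example : Ring (TrivSqZeroExt (QP.BQAF k s t sF tF I) (Y →ₗ[k] k)) := inferInstance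
example : Algebra k (TrivSqZeroExt (QP.BQAF k s t sF tF I) (Y →ₗ[k] k)) := inferInstance

section Deriv

variable (f : (Y ⊗[k] QP.BQA k s t I) →ₗ[k] k)

/-- The bilinear form associated to a functional on `Y ⊗ B`. -/
def Dmap : QP.BQA k s t I →ₗ[k] (Y →ₗ[k] k) := (TensorProduct.curry f).flip

lemma Dmap_apply (b : QP.BQA k s t I) (y : Y) :
    Dmap k s t I Y f b y = f (y ⊗ₜ[k] b) := rfl

variable (hf : ∀ u, f (HHlow.hb2 k (QP.BQAF k s t sF tF I) Y (QP.inclBF k s t sF tF I) u) = 0)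

include hf in
lemma Dmap_mul (b b' : QP.BQA k s t I) :
    Dmap k s t I Y f (b * b')
      = (QP.inclBF k s t sF tF I b) • Dmap k s t I Y f b'
        + MulOpposite.op (QP.inclBF k s t sF tF I b') • Dmap k s t I Y f b := by
  apply LinearMap.ext; intro y
  have h := hf ((y ⊗ₜ[k] b) ⊗ₜ[k] b')
  rw [HHlow.hb2_tmul] at h
  simp only [map_add, map_sub] at h
  rw [LinearMap.add_apply, wsmul_apply, wopsmul_apply, MulOpposite.unop_op]
  simp only [Dmap_apply]
  linear_combination -h

/-- The normalizing element `ξ₀ = ∑ᵥ eᵥ · g(eᵥ)`. -/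
def xi0 : Y →ₗ[k] k :=
  ∑ v : V, (QP.inclBF k s t sF tF I (QP.bv k s t I v))
    • Dmap k s t I Y f (QP.bv k s t I v)

/-- The inner derivation associated to `ξ₀`. -/
def innerD : QP.BQA k s t I →ₗ[k] (Y →ₗ[k] k) where
  toFun b := (QP.inclBF k s t sF tF I b) • xi0 k s t sF tF I Y f
    - MulOpposite.op (QP.inclBF k s t sF tF I b) • xi0 k s t sF tF I Y f
  map_add' b b' := by
    rw [map_add, MulOpposite.op_add, add_smul, add_smul]
    abel
  map_smul' a b := by
    rw [map_smul, MulOpposite.op_smul, smul_assoc, smul_assoc, RingHom.id_apply, smul_sub]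

/-- The normalized derivation. -/
def Dn : QP.BQA k s t I →ₗ[k] (Y →ₗ[k] k) :=
  Dmap k s t I Y f - innerD k s t sF tF I Y f

lemma innerD_apply (b : QP.BQA k s t I) :
    innerD k s t sF tF I Y f b = (QP.inclBF k s t sF tF I b) • xi0 k s t sF tF I Y f
      - MulOpposite.op (QP.inclBF k s t sF tF I b) • xi0 k s t sF tF I Y f := rfl

lemma Dn_apply (b : QP.BQA k s t I) :
    Dn k s t sF tF I Y f b = Dmap k s t I Y f b
      - ((QP.inclBF k s t sF tF I b) • xi0 k s t sF tF I Y f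
        - MulOpposite.op (QP.inclBF k s t sF tF I b) • xi0 k s t sF tF I Y f) := rfl

include hf in
lemma Dn_mul (b b' : QP.BQA k s t I) :
    Dn k s t sF tF I Y f (b * b')
      = (QP.inclBF k s t sF tF I b) • Dn k s t sF tF I Y f b'
        + MulOpposite.op (QP.inclBF k s t sF tF I b') • Dn k s t sF tF I Y f b := by
  rw [Dn_apply, Dn_apply, Dn_apply, Dmap_mul k s t sF tF I Y f hf]
  rw [map_mul, MulOpposite.op_mul]
  rw [smul_sub, smul_sub, smul_sub, smul_sub, mul_smul, mul_smul]
  rw [smul_comm (QP.inclBF k s t sF tF I b)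
    (MulOpposite.op (QP.inclBF k s t sF tF I b')) (xi0 k s t sF tF I Y f)]
  abel

include hf in
lemma Dn_one : Dn k s t sF tF I Y f 1 = 0 := by
  have h := Dn_mul k s t sF tF I Y f hf 1 1
  rw [mul_one, show QP.inclBF k s t sF tF I (1 : QP.BQA k s t I) = 1 from map_one _,
    one_smul, MulOpposite.op_one, one_smul] at h
  exact (add_eq_left.mp h.symm)

include hf in
lemma Dn_bv (u : V) : Dn k s t sF tF I Y f (QP.bv k s t I u) = 0 := by
  have hEmul : ∀ i j : V, (QP.inclBF k s t sF tF I (QP.bv k s t I i))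
      * (QP.inclBF k s t sF tF I (QP.bv k s t I j))
      = if i = j then QP.inclBF k s t sF tF I (QP.bv k s t I i) else 0 := by
    intro i j
    rw [← map_mul, bv_mul_bv]
    split_ifs <;> simp
  have hsum : (∑ v : V, QP.inclBF k s t sF tF I (QP.bv k s t I v)) = 1 := by
    rw [← map_sum, sum_bv, map_one]
  have hii : ∀ i : V, Dmap k s t I Y f (QP.bv k s t I i)
      = (QP.inclBF k s t sF tF I (QP.bv k s t I i)) • Dmap k s t I Y f (QP.bv k s t I i)
        + MulOpposite.op (QP.inclBF k s t sF tF I (QP.bv k s t I i))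
          • Dmap k s t I Y f (QP.bv k s t I i) := by
    intro i
    have h := Dmap_mul k s t sF tF I Y f hf (QP.bv k s t I i) (QP.bv k s t I i)
    rwa [bv_mul_bv, if_pos rfl] at h
  have hij : ∀ i j : V, i ≠ j →
      (QP.inclBF k s t sF tF I (QP.bv k s t I i)) • Dmap k s t I Y f (QP.bv k s t I j)
        + MulOpposite.op (QP.inclBF k s t sF tF I (QP.bv k s t I j))
          • Dmap k s t I Y f (QP.bv k s t I i) = 0 := by
    intro i j hne
    have h := Dmap_mul k s t sF tF I Y f hf (QP.bv k s t I i) (QP.bv k s t I j)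
    rw [bv_mul_bv, if_neg hne, map_zero] at h
    exact h.symm
  have h1 : (QP.inclBF k s t sF tF I (QP.bv k s t I u)) • xi0 k s t sF tF I Y f
      = (QP.inclBF k s t sF tF I (QP.bv k s t I u))
        • Dmap k s t I Y f (QP.bv k s t I u) := by
    unfold xi0
    rw [Finset.smul_sum]
    rw [Finset.sum_eq_single u]
    · rw [smul_smul, hEmul u u, if_pos rfl]
    · intro v _ hv
      rw [smul_smul, hEmul u v, if_neg (fun h => hv h.symm), zero_smul]
    · intro h; exact absurd (Finset.mem_univ u) h
  have h2 : MulOpposite.op (QP.inclBF k s t sF tF I (QP.bv k s t I u)) • xi0 k s t sF tF I Y f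
      = (QP.inclBF k s t sF tF I (QP.bv k s t I u))
          • Dmap k s t I Y f (QP.bv k s t I u)
        - Dmap k s t I Y f (QP.bv k s t I u) := by
    unfold xi0
    rw [Finset.smul_sum]
    have hterm : ∀ v : V,
        MulOpposite.op (QP.inclBF k s t sF tF I (QP.bv k s t I u))
          • ((QP.inclBF k s t sF tF I (QP.bv k s t I v))
            • Dmap k s t I Y f (QP.bv k s t I v))
        = if v = u then 0
          else -((QP.inclBF k s t sF tF I (QP.bv k s t I v))
            • Dmap k s t I Y f (QP.bv k s t I u)) := by
      intro v
      rw [smul_comm]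
      by_cases hv : v = u
      · subst hv
        rw [if_pos rfl]
        have hop : MulOpposite.op (QP.inclBF k s t sF tF I (QP.bv k s t I v))
            • Dmap k s t I Y f (QP.bv k s t I v)
            = Dmap k s t I Y f (QP.bv k s t I v)
              - (QP.inclBF k s t sF tF I (QP.bv k s t I v))
                • Dmap k s t I Y f (QP.bv k s t I v) := by
          rw [eq_sub_iff_add_eq, add_comm]
          exact (hii v).symm
        rw [hop, smul_sub, smul_smul, hEmul v v, if_pos rfl, sub_self]
      · rw [if_neg hv]
        have hop : MulOpposite.op (QP.inclBF k s t sF tF I (QP.bv k s t I u))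
            • Dmap k s t I Y f (QP.bv k s t I v)
            = -((QP.inclBF k s t sF tF I (QP.bv k s t I v))
              • Dmap k s t I Y f (QP.bv k s t I u)) := by
          have h := hij v u hv
          linear_combination (norm := abel) h
        rw [hop, smul_neg, smul_smul, hEmul v v, if_pos rfl]
    rw [Finset.sum_congr rfl (fun v _ => hterm v)]
    have hsplit : ∀ v : V,
        (if v = u then (0 : Y →ₗ[k] k)
          else -((QP.inclBF k s t sF tF I (QP.bv k s t I v))
            • Dmap k s t I Y f (QP.bv k s t I u)))
        = -((QP.inclBF k s t sF tF I (QP.bv k s t I v))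
            • Dmap k s t I Y f (QP.bv k s t I u))
          + (if v = u then (QP.inclBF k s t sF tF I (QP.bv k s t I v))
              • Dmap k s t I Y f (QP.bv k s t I u) else 0) := by
      intro v
      split_ifs with h
      · rw [neg_add_cancel]
      · rw [add_zero]
    rw [Finset.sum_congr rfl (fun v _ => hsplit v), Finset.sum_add_distrib]
    rw [Finset.sum_ite_eq' Finset.univ u
      (fun v => (QP.inclBF k s t sF tF I (QP.bv k s t I v))
        • Dmap k s t I Y f (QP.bv k s t I u)), if_pos (Finset.mem_univ u)]
    rw [Finset.sum_neg_distrib, ← Finset.sum_smul, hsum, one_smul]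
    abel
  rw [Dn_apply, h1, h2]
  abel

include hf in
/-- The algebra map `B → B_F ⋉ Y*` attached to the normalized derivation. -/
def tauD : QP.BQA k s t I →ₐ[k] TrivSqZeroExt (QP.BQAF k s t sF tF I) (Y →ₗ[k] k) where
  toFun b := TrivSqZeroExt.inl (QP.inclBF k s t sF tF I b)
    + TrivSqZeroExt.inr (Dn k s t sF tF I Y f b)
  map_one' := by
    rw [map_one, Dn_one k s t sF tF I Y f hf, TrivSqZeroExt.inr_zero, add_zero,
      TrivSqZeroExt.inl_one]
  map_mul' b b' := by
    apply TrivSqZeroExt.ext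
    · simp only [TrivSqZeroExt.fst_add, TrivSqZeroExt.fst_inl, TrivSqZeroExt.fst_inr,
        TrivSqZeroExt.fst_mul, add_zero, map_mul]
    · simp only [TrivSqZeroExt.snd_add, TrivSqZeroExt.snd_inl, TrivSqZeroExt.snd_inr,
        TrivSqZeroExt.snd_mul, TrivSqZeroExt.fst_add, TrivSqZeroExt.fst_inl,
        TrivSqZeroExt.fst_inr, zero_add, add_zero, smul_zero]
      rw [Dn_mul k s t sF tF I Y f hf]
  map_zero' := by
    rw [map_zero, map_zero, TrivSqZeroExt.inl_zero, TrivSqZeroExt.inr_zero, add_zero]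
  map_add' b b' := by
    apply TrivSqZeroExt.ext
    · simp only [TrivSqZeroExt.fst_add, TrivSqZeroExt.fst_inl, TrivSqZeroExt.fst_inr,
        add_zero, map_add]
    · simp only [TrivSqZeroExt.snd_add, TrivSqZeroExt.snd_inl, TrivSqZeroExt.snd_inr,
        zero_add, map_add]
  commutes' a := by
    have h1 : QP.inclBF k s t sF tF I (algebraMap k (QP.BQA k s t I) a)
        = algebraMap k (QP.BQAF k s t sF tF I) a := AlgHom.commutes _ _
    have h2 : Dn k s t sF tF I Y f (algebraMap k (QP.BQA k s t I) a) = 0 := by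
      rw [Algebra.algebraMap_eq_smul_one, map_smul, Dn_one k s t sF tF I Y f hf, smul_zero]
    show TrivSqZeroExt.inl _ + TrivSqZeroExt.inr _ = _
    rw [h1, h2, TrivSqZeroExt.inr_zero, add_zero, TrivSqZeroExt.algebraMap_eq_inl']

lemma tauD_apply (b : QP.BQA k s t I) :
    tauD k s t sF tF I Y f hf b = TrivSqZeroExt.inl (QP.inclBF k s t sF tF I b)
      + TrivSqZeroExt.inr (Dn k s t sF tF I Y f b) := rfl

include hf in
lemma tauD_bv (v : V) :
    tauD k s t sF tF I Y f hf (QP.bv k s t I v)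
      = TrivSqZeroExt.inl
          (QP.bv k (Sum.elim s sF) (Sum.elim t tF) (QP.idealF k s t sF tF I) v) := by
  rw [tauD_apply, Dn_bv k s t sF tF I Y f hf, TrivSqZeroExt.inr_zero, add_zero, inclBF_bv]

include hf in
lemma tauD_mk_zero {x : QP.PathAlg k V E s t} (hx : x ∈ I) :
    tauD k s t sF tF I Y f hf (QP.bqaMk k s t I x) = 0 := by
  rw [bqaMk_eq_zero_of_mem k s t I hx, map_zero]

/-- Generator values for the extension of the derivation to `B_F`. -/
def rhoGen : V ⊕ (E ⊕ F) → TrivSqZeroExt (QP.BQAF k s t sF tF I) (Y →ₗ[k] k) := fun g =>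
  match g with
  | Sum.inl v => TrivSqZeroExt.inl
      (QP.bv k (Sum.elim s sF) (Sum.elim t tF) (QP.idealF k s t sF tF I) v)
  | Sum.inr (Sum.inl α) => tauD k s t sF tF I Y f hf (barr k s t I α)
  | Sum.inr (Sum.inr a) => TrivSqZeroExt.inl
      (barr k (Sum.elim s sF) (Sum.elim t tF) (QP.idealF k s t sF tF I) (Sum.inr a))

/-- The free-algebra level extension map. -/
def rhoFree : FreeAlgebra k (V ⊕ (E ⊕ F)) →ₐ[k]
    TrivSqZeroExt (QP.BQAF k s t sF tF I) (Y →ₗ[k] k) :=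
  FreeAlgebra.lift k (rhoGen k s t sF tF I Y f hf)

include hf in
lemma rhoFree_rel : ∀ ⦃x y : FreeAlgebra k (V ⊕ (E ⊕ F))⦄,
    QP.PRel k V (E ⊕ F) (Sum.elim s sF) (Sum.elim t tF) x y →
    rhoFree k s t sF tF I Y f hf x = rhoFree k s t sF tF I Y f hf y := by
  intro x y h
  induction h with
  | idem i j =>
      rcases eq_or_ne i j with h | h
      · subst h
        rw [if_pos rfl]
        simp only [rhoFree, map_mul, FreeAlgebra.lift_ι_apply, rhoGen]
        rw [TrivSqZeroExt.inl_mul_inl, bv_mul_bv, if_pos rfl]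
      · rw [if_neg h]
        simp only [rhoFree, map_mul, FreeAlgebra.lift_ι_apply, rhoGen, map_zero]
        rw [TrivSqZeroExt.inl_mul_inl, bv_mul_bv, if_neg h, TrivSqZeroExt.inl_zero]
  | unit =>
      simp only [rhoFree, map_sum, map_one, FreeAlgebra.lift_ι_apply, rhoGen]
      rw [← TrivSqZeroExt.inl_sum, sum_bv, TrivSqZeroExt.inl_one]
  | arrow_left a =>
      rcases a with α | a
      · simp only [rhoFree, map_mul, FreeAlgebra.lift_ι_apply, rhoGen, Sum.elim_inl]
        rw [← tauD_bv k s t sF tF I Y f hf, ← map_mul, bv_mul_barr k s t I α]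
      · simp only [rhoFree, map_mul, FreeAlgebra.lift_ι_apply, rhoGen, Sum.elim_inr]
        rw [TrivSqZeroExt.inl_mul_inl]
        have h := bv_mul_barr k (Sum.elim s sF) (Sum.elim t tF)
          (QP.idealF k s t sF tF I) (Sum.inr a)
        simp only [Sum.elim_inr] at h
        rw [h]
  | arrow_right a =>
      rcases a with α | a
      · simp only [rhoFree, map_mul, FreeAlgebra.lift_ι_apply, rhoGen, Sum.elim_inl]
        rw [← tauD_bv k s t sF tF I Y f hf, ← map_mul, barr_mul_bv k s t I α]
      · simp only [rhoFree, map_mul, FreeAlgebra.lift_ι_apply, rhoGen, Sum.elim_inr]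
        rw [TrivSqZeroExt.inl_mul_inl]
        have h := barr_mul_bv k (Sum.elim s sF) (Sum.elim t tF)
          (QP.idealF k s t sF tF I) (Sum.inr a)
        simp only [Sum.elim_inr] at h
        rw [h]

/-- The path-algebra level extension map. -/
def rho1 : QP.PathAlg k V (E ⊕ F) (Sum.elim s sF) (Sum.elim t tF) →ₐ[k]
    TrivSqZeroExt (QP.BQAF k s t sF tF I) (Y →ₗ[k] k) :=
  RingQuot.liftAlgHom k ⟨rhoFree k s t sF tF I Y f hf, rhoFree_rel k s t sF tF I Y f hf⟩

lemma rho1_mk (x : FreeAlgebra k (V ⊕ (E ⊕ F))) :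
    rho1 k s t sF tF I Y f hf
        (RingQuot.mkAlgHom k (QP.PRel k V (E ⊕ F) (Sum.elim s sF) (Sum.elim t tF)) x)
      = rhoFree k s t sF tF I Y f hf x :=
  RingQuot.liftAlgHom_mkAlgHom_apply _ _ _ _

include hf in
lemma rho1_comp_extend :
    (rho1 k s t sF tF I Y f hf).comp (QP.extendPath k s t sF tF)
      = (tauD k s t sF tF I Y f hf).comp (QP.bqaMk k s t I) := by
  apply RingQuot.ringQuot_ext'
  apply FreeAlgebra.hom_ext
  funext g
  simp only [Function.comp_apply, AlgHom.comp_apply, AlgHom.coe_comp]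
  unfold QP.extendPath
  rw [RingQuot.liftAlgHom_mkAlgHom_apply, FreeAlgebra.lift_ι_apply]
  rcases g with v | α
  · rw [rho1_mk, rhoFree, FreeAlgebra.lift_ι_apply]
    show rhoGen k s t sF tF I Y f hf (Sum.inl v) = _
    rw [rhoGen, ← tauD_bv k s t sF tF I Y f hf]
    rfl
  · rw [rho1_mk, rhoFree, FreeAlgebra.lift_ι_apply]
    rfl

include hf in
lemma rho1_ker : ∀ z ∈ QP.idealF k s t sF tF I, rho1 k s t sF tF I Y f hf z = 0 := by
  intro z hz
  have hsub : (QP.extendPath k s t sF tF '' (I : Set (QP.PathAlg k V E s t)))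
      ⊆ (TwoSidedIdeal.ker (rho1 k s t sF tF I Y f hf) :
          Set (QP.PathAlg k V (E ⊕ F) (Sum.elim s sF) (Sum.elim t tF))) := by
    rintro _ ⟨x0, hx0, rfl⟩
    rw [SetLike.mem_coe, TwoSidedIdeal.mem_ker]
    have h := AlgHom.congr_fun (rho1_comp_extend k s t sF tF I Y f hf) x0
    simp only [AlgHom.comp_apply] at h
    rw [h, tauD_mk_zero k s t sF tF I Y f hf hx0]
  exact (TwoSidedIdeal.mem_ker _).mp (TwoSidedIdeal.mem_span_iff.mp hz _ hsub)

/-- The extension of the derivation-package to `B_F`. -/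
def rhoD : QP.BQAF k s t sF tF I →ₐ[k]
    TrivSqZeroExt (QP.BQAF k s t sF tF I) (Y →ₗ[k] k) :=
  RingQuot.liftAlgHom k ⟨rho1 k s t sF tF I Y f hf, by
    intro x y h
    have h0 : rho1 k s t sF tF I Y f hf (x - y) = 0 :=
      rho1_ker k s t sF tF I Y f hf _ h
    rw [map_sub] at h0
    exact sub_eq_zero.mp h0⟩

lemma rhoD_mk (x : QP.PathAlg k V (E ⊕ F) (Sum.elim s sF) (Sum.elim t tF)) :
    rhoD k s t sF tF I Y f hf (QP.bqaMk k (Sum.elim s sF) (Sum.elim t tF)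
        (QP.idealF k s t sF tF I) x)
      = rho1 k s t sF tF I Y f hf x :=
  RingQuot.liftAlgHom_mkAlgHom_apply _ _ _ _

include hf in
lemma rhoD_bv (v : V) :
    rhoD k s t sF tF I Y f hf
        (QP.bv k (Sum.elim s sF) (Sum.elim t tF) (QP.idealF k s t sF tF I) v)
      = TrivSqZeroExt.inl
          (QP.bv k (Sum.elim s sF) (Sum.elim t tF) (QP.idealF k s t sF tF I) v) := by
  have e : QP.bv k (Sum.elim s sF) (Sum.elim t tF) (QP.idealF k s t sF tF I) v
      = QP.bqaMk k (Sum.elim s sF) (Sum.elim t tF) (QP.idealF k s t sF tF I)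
          (RingQuot.mkAlgHom k (QP.PRel k V (E ⊕ F) (Sum.elim s sF) (Sum.elim t tF))
            (FreeAlgebra.ι k (Sum.inl v))) := rfl
  rw [e, rhoD_mk, rho1_mk, rhoFree, FreeAlgebra.lift_ι_apply]
  rfl

include hf in
lemma rhoD_barr (x : E ⊕ F) :
    rhoD k s t sF tF I Y f hf
        (barr k (Sum.elim s sF) (Sum.elim t tF) (QP.idealF k s t sF tF I) x)
      = rhoGen k s t sF tF I Y f hf (Sum.inr x) := by
  have e : barr k (Sum.elim s sF) (Sum.elim t tF) (QP.idealF k s t sF tF I) x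
      = QP.bqaMk k (Sum.elim s sF) (Sum.elim t tF) (QP.idealF k s t sF tF I)
          (RingQuot.mkAlgHom k (QP.PRel k V (E ⊕ F) (Sum.elim s sF) (Sum.elim t tF))
            (FreeAlgebra.ι k (Sum.inr x))) := rfl
  rw [e, rhoD_mk, rho1_mk, rhoFree, FreeAlgebra.lift_ι_apply]

include hf in
lemma fst_rhoD (c : QP.BQAF k s t sF tF I) :
    TrivSqZeroExt.fst (rhoD k s t sF tF I Y f hf c) = c := by
  have h : (TrivSqZeroExt.fstHom k (QP.BQAF k s t sF tF I) (Y →ₗ[k] k)).comp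
      (rhoD k s t sF tF I Y f hf) = AlgHom.id k (QP.BQAF k s t sF tF I) := by
    apply bqa_algHom_ext k (Sum.elim s sF) (Sum.elim t tF) (QP.idealF k s t sF tF I)
    · intro v
      simp only [AlgHom.comp_apply, AlgHom.coe_id, id_eq]
      rw [rhoD_bv k s t sF tF I Y f hf, TrivSqZeroExt.fstHom_apply, TrivSqZeroExt.fst_inl]
    · intro a
      simp only [AlgHom.comp_apply, AlgHom.coe_id, id_eq]
      rw [rhoD_barr k s t sF tF I Y f hf, TrivSqZeroExt.fstHom_apply]
      rcases a with α | a
      · show ((tauD k s t sF tF I Y f hf) (barr k s t I α)).fst = _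
        rw [tauD_apply, TrivSqZeroExt.fst_add, TrivSqZeroExt.fst_inl, TrivSqZeroExt.fst_inr,
          add_zero, inclBF_barr]
      · show (TrivSqZeroExt.inl _ : TrivSqZeroExt (QP.BQAF k s t sF tF I) (Y →ₗ[k] k)).fst = _
        rw [TrivSqZeroExt.fst_inl]
  have h2 := AlgHom.congr_fun h c
  simpa using h2

include hf in
lemma rhoD_incl (b : QP.BQA k s t I) :
    rhoD k s t sF tF I Y f hf (QP.inclBF k s t sF tF I b)
      = tauD k s t sF tF I Y f hf b := by
  have h : (rhoD k s t sF tF I Y f hf).comp (QP.inclBF k s t sF tF I)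
      = tauD k s t sF tF I Y f hf := by
    apply bqa_algHom_ext k s t I
    · intro v
      simp only [AlgHom.comp_apply]
      rw [inclBF_bv, rhoD_bv k s t sF tF I Y f hf, tauD_bv k s t sF tF I Y f hf]
    · intro α
      simp only [AlgHom.comp_apply]
      rw [inclBF_barr, rhoD_barr k s t sF tF I Y f hf]
      rfl
  exact AlgHom.congr_fun h b

/-- The extended derivation `B_F → Y*`. -/
def Gd : QP.BQAF k s t sF tF I →ₗ[k] (Y →ₗ[k] k) where
  toFun c := (rhoD k s t sF tF I Y f hf c).snd
  map_add' c c' := by rw [map_add, TrivSqZeroExt.snd_add]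
  map_smul' a c := by rw [map_smul, TrivSqZeroExt.snd_smul, RingHom.id_apply]

lemma Gd_apply (c : QP.BQAF k s t sF tF I) :
    Gd k s t sF tF I Y f hf c = (rhoD k s t sF tF I Y f hf c).snd := rfl

include hf in
lemma Gd_mul (c c' : QP.BQAF k s t sF tF I) :
    Gd k s t sF tF I Y f hf (c * c')
      = c • Gd k s t sF tF I Y f hf c' + MulOpposite.op c' • Gd k s t sF tF I Y f hf c := by
  rw [Gd_apply, map_mul, TrivSqZeroExt.snd_mul, fst_rhoD k s t sF tF I Y f hf,
    fst_rhoD k s t sF tF I Y f hf]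
  rfl

include hf in
lemma Gd_incl (b : QP.BQA k s t I) :
    Gd k s t sF tF I Y f hf (QP.inclBF k s t sF tF I b) = Dn k s t sF tF I Y f b := by
  rw [Gd_apply, rhoD_incl k s t sF tF I Y f hf, tauD_apply, TrivSqZeroExt.snd_add,
    TrivSqZeroExt.snd_inl, TrivSqZeroExt.snd_inr, zero_add]

/-- The functional on `Y ⊗ B_F` associated to the extended derivation. -/
def F1 : (Y ⊗[k] QP.BQAF k s t sF tF I) →ₗ[k] k :=
  TensorProduct.lift (LinearMap.flip (Gd k s t sF tF I Y f hf))

lemma F1_tmul (y : Y) (c : QP.BQAF k s t sF tF I) :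
    F1 k s t sF tF I Y f hf (y ⊗ₜ[k] c) = Gd k s t sF tF I Y f hf c y := by
  rw [F1, TensorProduct.lift.tmul]
  rfl

include hf in
lemma F1_hb2 (u : (Y ⊗[k] QP.BQAF k s t sF tF I) ⊗[k] QP.BQAF k s t sF tF I) :
    F1 k s t sF tF I Y f hf
      (HHlow.hb2 k (QP.BQAF k s t sF tF I) Y (AlgHom.id k (QP.BQAF k s t sF tF I)) u) = 0 := by
  have h : (F1 k s t sF tF I Y f hf).comp
      (HHlow.hb2 k (QP.BQAF k s t sF tF I) Y (AlgHom.id k (QP.BQAF k s t sF tF I))) = 0 := by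
    apply TensorProduct.ext'
    intro x c'
    induction x using TensorProduct.induction_on with
    | zero => simp
    | tmul y c =>
        simp only [LinearMap.comp_apply, LinearMap.zero_apply]
        rw [HHlow.hb2_tmul]
        simp only [map_add, map_sub, AlgHom.coe_id, id_eq]
        rw [F1_tmul, F1_tmul, F1_tmul, Gd_mul k s t sF tF I Y f hf, LinearMap.add_apply,
          wsmul_apply, wopsmul_apply, MulOpposite.unop_op]
        abel
    | add v w hv hw =>
        simp only [TensorProduct.add_tmul, map_add, LinearMap.comp_apply,
          LinearMap.zero_apply] at *
        rw [hv, hw, add_zero]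
  exact LinearMap.congr_fun h u

include hf in
lemma f_decomp (z : Y ⊗[k] QP.BQA k s t I) :
    f z = F1 k s t sF tF I Y f hf
        (HHlow.chain1 k Y Y (QP.inclBF k s t sF tF I) LinearMap.id z)
      + (xi0 k s t sF tF I Y f)
          (HHlow.hb1 k (QP.BQAF k s t sF tF I) Y (QP.inclBF k s t sF tF I) z) := by
  have h : f = (F1 k s t sF tF I Y f hf).comp
        (HHlow.chain1 k Y Y (QP.inclBF k s t sF tF I) LinearMap.id)
      + (xi0 k s t sF tF I Y f).comp
          (HHlow.hb1 k (QP.BQAF k s t sF tF I) Y (QP.inclBF k s t sF tF I)) := by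
    apply TensorProduct.ext'
    intro y b
    simp only [LinearMap.add_apply, LinearMap.comp_apply]
    rw [HHlow.hb1_tmul]
    have hc : HHlow.chain1 k Y Y (QP.inclBF k s t sF tF I) LinearMap.id (y ⊗ₜ[k] b)
        = y ⊗ₜ[k] (QP.inclBF k s t sF tF I b) := by
      rw [HHlow.chain1, TensorProduct.map_tmul]
      rfl
    rw [hc, F1_tmul, Gd_incl k s t sF tF I Y f hf, Dn_apply]
    simp only [LinearMap.sub_apply, wsmul_apply, wopsmul_apply, MulOpposite.unop_op,
      Dmap_apply, map_sub]
    ring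
  have h2 := LinearMap.congr_fun h z
  simpa using h2

end Deriv

/-- The key lemma: a Hochschild 1-cycle for `B` which becomes a boundary in `B_F`
is already a boundary for `B`. -/
lemma mem_range_hb2 (x : Y ⊗[k] QP.BQA k s t I)
    (hx : HHlow.hb1 k (QP.BQAF k s t sF tF I) Y (QP.inclBF k s t sF tF I) x = 0)
    (w : (Y ⊗[k] QP.BQAF k s t sF tF I) ⊗[k] QP.BQAF k s t sF tF I)
    (hw : HHlow.hb2 k (QP.BQAF k s t sF tF I) Y (AlgHom.id k (QP.BQAF k s t sF tF I)) w
        = HHlow.chain1 k Y Y (QP.inclBF k s t sF tF I) LinearMap.id x) :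
    x ∈ LinearMap.range
      (HHlow.hb2 k (QP.BQAF k s t sF tF I) Y (QP.inclBF k s t sF tF I)) := by
  by_contra hmem
  set R := LinearMap.range
    (HHlow.hb2 k (QP.BQAF k s t sF tF I) Y (QP.inclBF k s t sF tF I)) with hR
  have h0 : (Submodule.Quotient.mk x : (Y ⊗[k] QP.BQA k s t I) ⧸ R) ≠ 0 := by
    rw [ne_eq, Submodule.Quotient.mk_eq_zero]
    exact hmem
  have hex : ∃ φ : Module.Dual k ((Y ⊗[k] QP.BQA k s t I) ⧸ R),
      φ (Submodule.Quotient.mk x) ≠ 0 := by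
    by_contra hc
    push_neg at hc
    exact h0 ((Module.forall_dual_apply_eq_zero_iff k _).mp hc)
  obtain ⟨φ, hφ⟩ := hex
  set f := (φ.comp R.mkQ : (Y ⊗[k] QP.BQA k s t I) →ₗ[k] k) with hfdef
  have hf : ∀ u, f (HHlow.hb2 k (QP.BQAF k s t sF tF I) Y (QP.inclBF k s t sF tF I) u) = 0 := by
    intro u
    have hm : HHlow.hb2 k (QP.BQAF k s t sF tF I) Y (QP.inclBF k s t sF tF I) u ∈ R :=
      ⟨u, rfl⟩
    rw [hfdef, LinearMap.comp_apply, Submodule.mkQ_apply,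
      (Submodule.Quotient.mk_eq_zero R).mpr hm, map_zero]
  have hd := f_decomp k s t sF tF I Y f hf x
  rw [hx, map_zero, add_zero, ← hw, F1_hb2 k s t sF tF I Y f hf w] at hd
  apply hφ
  rw [hfdef] at hd
  simpa using hd



end DualMod

end Specific

end QPAux

end AuxProof

section
variable (k : Type) [Field k]
variable {V E : Type} [Fintype V] [DecidableEq V] [Fintype E] (s t : E → V)
variable {F : Type} [Fintype F] (sF tF : F → V)
variable (I : TwoSidedIdeal (QP.PathAlg k V E s t))

theorem H1_homology_map_of_inclusion_injective (hI : QP.IsAdmissible k s t I) (hnc : QP.NoRelCycles k s t sF tF I)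
    (Y : Type) [AddCommGroup Y] [Module k Y]
    [Module (QP.BQAF k s t sF tF I) Y] [Module (QP.BQAF k s t sF tF I)ᵐᵒᵖ Y]
    [SMulCommClass k (QP.BQAF k s t sF tF I) Y]
    [SMulCommClass k (QP.BQAF k s t sF tF I)ᵐᵒᵖ Y]
    [IsScalarTower k (QP.BQAF k s t sF tF I) Y]
    [IsScalarTower k (QP.BQAF k s t sF tF I)ᵐᵒᵖ Y]
    [SMulCommClass (QP.BQAF k s t sF tF I) (QP.BQAF k s t sF tF I)ᵐᵒᵖ Y]
    [FiniteDimensional k Y] :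
    Function.Injective
      (HHlow.H1hMap k (QP.BQAF k s t sF tF I) Y (QP.BQAF k s t sF tF I) Y
        (QP.inclBF k s t sF tF I) (AlgHom.id k (QP.BQAF k s t sF tF I))
        (QP.inclBF k s t sF tF I) LinearMap.id
        (fun b y => rfl) (fun b y => rfl)) := by
  apply QPAux.mapQ_inj
  rintro ⟨x, hx⟩ hmem
  rw [Submodule.mem_comap] at hmem ⊢
  obtain ⟨w, hw⟩ := hmem
  have hx0 : HHlow.hb1 k (QP.BQAF k s t sF tF I) Y (QP.inclBF k s t sF tF I) x = 0 :=
    LinearMap.mem_ker.mp hx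
  have hw' : HHlow.hb2 k (QP.BQAF k s t sF tF I) Y (AlgHom.id k (QP.BQAF k s t sF tF I)) w
      = HHlow.chain1 k Y Y (QP.inclBF k s t sF tF I) LinearMap.id x := by
    simpa [LinearMap.restrict_apply] using hw
  have hxr := QPAux.mem_range_hb2 k s t sF tF I Y x hx0 w hw'
  simpa using hxr

end
end
end

section
/- Let k be a field, B = kQ/I a bound quiver algebra, and F a set of new arrows with no relative cycles. Viewing B_F as a B-bimodule via the inclusion B ⊆ B_F, the map H_1(B, B) → H_1(B, B_F) induced by the inclusion of B-bimodules B ⊆ B_F is an isomorphism; that is, H_1(B, B_F) ≅ HH_1(B). -/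
/-
  Formalization of statements from:
  "The first Hochschild (co)homology when adding arrows to a bound quiver algebra"
  by C. Cibils, M. Lanzilotta, E. N. Marcos, S. Schroll, A. Solotar.
-/

set_option linter.unusedSectionVars false
set_option linter.unusedVariables false
set_option maxSynthPendingDepth 3

open CategoryTheory

noncomputable section

set_option maxHeartbeats 2000000
set_option synthInstance.maxHeartbeats 1000000
open scoped TensorProduct
section Aux
variable (k : Type) [Field k]
variable {V E : Type} [Fintype V] [DecidableEq V] [Fintype E] (s t : E → V)
variable {F : Type} [Fintype F] (sF tF : F → V)
variable (I : TwoSidedIdeal (QP.PathAlg k V E s t))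

local notation "B" => QP.BQA k s t I
local notation "BF" => QP.BQAF k s t sF tF I
local notation "NN" => (QP.BQAF k s t sF tF I) ⊗[k] (QP.BQA k s t I)

noncomputable instance modLeftN : Module (BF × B) NN :=
  Module.compHom _ (RingHom.fst BF B)

@[simp] lemma prod_smul_def (p : BF × B) (n : NN) : p • n = p.1 • n := rfl

noncomputable instance modRightN : Module (BF × B)ᵐᵒᵖ NN where
  smul q n := LinearMap.lTensor BF (LinearMap.mulRight k q.unop.2) n
  one_smul n := by
    show LinearMap.lTensor BF (LinearMap.mulRight k (1:B)) n = n
    have : LinearMap.mulRight k (1:B) = LinearMap.id := by ext x; simp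
    rw [this, LinearMap.lTensor_id]; rfl
  mul_smul q q' n := by
    show LinearMap.lTensor BF (LinearMap.mulRight k ((q * q').unop.2)) n
      = LinearMap.lTensor BF (LinearMap.mulRight k (q.unop.2)) (LinearMap.lTensor BF (LinearMap.mulRight k (q'.unop.2)) n)
    rw [← LinearMap.comp_apply, ← LinearMap.lTensor_comp]
    congr 1
    ext x
    simp [mul_assoc]
  smul_zero q := map_zero _
  smul_add q := map_add _
  add_smul q q' n := by
    show LinearMap.lTensor BF (LinearMap.mulRight k ((q+q').unop.2)) n = _
    have : LinearMap.mulRight k ((q+q').unop.2) =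
        LinearMap.mulRight k (q.unop.2) + LinearMap.mulRight k (q'.unop.2) := by
      ext x; simp [mul_add]
    rw [this, LinearMap.lTensor_add]; rfl
  zero_smul n := by
    show LinearMap.lTensor BF (LinearMap.mulRight k ((0 : (BF × B)ᵐᵒᵖ).unop.2)) n = 0
    have : LinearMap.mulRight k ((0 : (BF × B)ᵐᵒᵖ).unop.2) = 0 := by ext x; simp
    rw [this, LinearMap.lTensor_zero]; rfl

@[simp] lemma op_smul_def (q : (BF × B)ᵐᵒᵖ) (n : NN) :
    q • n = LinearMap.lTensor BF (LinearMap.mulRight k q.unop.2) n := rfl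

end Aux
section Aux2
variable (k : Type) [Field k]
variable {V E : Type} [Fintype V] [DecidableEq V] [Fintype E] (s t : E → V)
variable {F : Type} [Fintype F] (sF tF : F → V)
variable (I : TwoSidedIdeal (QP.PathAlg k V E s t))

local notation "B" => QP.BQA k s t I
local notation "BF" => QP.BQAF k s t sF tF I
local notation "NN" => (QP.BQAF k s t sF tF I) ⊗[k] (QP.BQA k s t I)

noncomputable instance sccN : SMulCommClass (BF × B) (BF × B)ᵐᵒᵖ NN where
  smul_comm p q n := by
    simp only [prod_smul_def, op_smul_def]
    induction n using TensorProduct.induction_on with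
    | zero => simp
    | tmul y b => simp [TensorProduct.smul_tmul']
    | add x y hx hy => simp only [smul_add, map_add, hx, hy]

noncomputable instance istN : IsScalarTower k (BF × B) NN where
  smul_assoc c p n := by
    simp only [prod_smul_def]
    show ((c • p).1) • n = c • (p.1 • n)
    rw [Prod.smul_fst, smul_assoc]

noncomputable instance istN' : IsScalarTower k (BF × B)ᵐᵒᵖ NN where
  smul_assoc c q n := by
    simp only [op_smul_def]
    have h1 : (c • q).unop.2 = c • q.unop.2 := rfl
    rw [h1]
    have h2 : LinearMap.mulRight k (c • q.unop.2) = c • LinearMap.mulRight k q.unop.2 := by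
      ext x; simp [mul_smul_comm]
    rw [h2, LinearMap.lTensor_smul, LinearMap.smul_apply]

end Aux2
section GenRel
variable (k : Type) [Field k]
variable {V' E' : Type} [Fintype V'] [DecidableEq V'] (s' t' : E' → V')
variable (I' : TwoSidedIdeal (QP.PathAlg k V' E' s' t'))

lemma vtx_mul_vtx (i j : V') :
    QP.vtx k s' t' i * QP.vtx k s' t' j = if i = j then QP.vtx k s' t' i else 0 := by
  unfold QP.vtx
  rw [← map_mul]
  rw [RingQuot.mkAlgHom_rel k (QP.PRel.idem (k := k) (s := s') (t := t') i j)]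
  split <;> simp

lemma vtx_mul_arr (a : E') :
    QP.vtx k s' t' (t' a) * QP.arr k s' t' a = QP.arr k s' t' a := by
  unfold QP.vtx QP.arr
  rw [← map_mul, RingQuot.mkAlgHom_rel k (QP.PRel.arrow_left (k := k) (s := s') (t := t') a)]

lemma arr_mul_vtx (a : E') :
    QP.arr k s' t' a * QP.vtx k s' t' (s' a) = QP.arr k s' t' a := by
  unfold QP.vtx QP.arr
  rw [← map_mul, RingQuot.mkAlgHom_rel k (QP.PRel.arrow_right (k := k) (s := s') (t := t') a)]

/-- image of arrow in the bound quiver algebra -/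
noncomputable def ba (x : E') : QP.BQA k s' t' I' :=
  QP.bqaMk k s' t' I' (QP.arr k s' t' x)

lemma bv_mul_bv (i j : V') :
    QP.bv k s' t' I' i * QP.bv k s' t' I' j
      = if i = j then QP.bv k s' t' I' i else 0 := by
  unfold QP.bv
  rw [← map_mul, vtx_mul_vtx]
  split <;> simp

lemma bv_mul_ba (a : E') :
    QP.bv k s' t' I' (t' a) * ba k s' t' I' a = ba k s' t' I' a := by
  unfold QP.bv ba
  rw [← map_mul, vtx_mul_arr]

lemma ba_mul_bv (a : E') :
    ba k s' t' I' a * QP.bv k s' t' I' (s' a) = ba k s' t' I' a := by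
  unfold QP.bv ba
  rw [← map_mul, arr_mul_vtx]

lemma bqaMk_eq_zero {x : QP.PathAlg k V' E' s' t'} (hx : x ∈ I') :
    QP.bqaMk k s' t' I' x = 0 := by
  have : QP.bqaMk k s' t' I' x = QP.bqaMk k s' t' I' 0 := by
    exact RingQuot.mkAlgHom_rel k (by simpa using hx)
  simpa using this

end GenRel
section GenRel2
variable (k : Type) [Field k]
variable {V' E' : Type} [Fintype V'] [DecidableEq V'] (s' t' : E' → V')
variable (I' : TwoSidedIdeal (QP.PathAlg k V' E' s' t'))

lemma sum_bv : (∑ i : V', QP.bv k s' t' I' i) = 1 := by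
  unfold QP.bv QP.vtx QP.bqaMk
  rw [← map_sum, ← map_sum,
    RingQuot.mkAlgHom_rel k (QP.PRel.unit (k := k) (V := V') (E := E') (s := s') (t := t')),
    map_one, map_one]

lemma bqa_hom_ext {A : Type} [Semiring A] [Algebra k A]
    {f g : QP.BQA k s' t' I' →ₐ[k] A}
    (hv : ∀ i : V', f (QP.bv k s' t' I' i) = g (QP.bv k s' t' I' i))
    (ha : ∀ e : E', f (ba k s' t' I' e) = g (ba k s' t' I' e)) : f = g := by
  apply RingQuot.ringQuot_ext'
  apply RingQuot.ringQuot_ext'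
  apply FreeAlgebra.hom_ext
  funext x
  cases x with
  | inl i => exact hv i
  | inr e => exact ha e

end GenRel2
section Psi
variable (k : Type) [Field k]
variable {V E : Type} [Fintype V] [DecidableEq V] [Fintype E] (s t : E → V)
variable {F : Type} [Fintype F] (sF tF : F → V)
variable (I : TwoSidedIdeal (QP.PathAlg k V E s t))

local notation "B" => QP.BQA k s t I
local notation "BF" => QP.BQAF k s t sF tF I
local notation "NN" => (QP.BQAF k s t sF tF I) ⊗[k] (QP.BQA k s t I)
local notation "EE" => TrivSqZeroExt ((QP.BQAF k s t sF tF I) × (QP.BQA k s t I))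
  ((QP.BQAF k s t sF tF I) ⊗[k] (QP.BQA k s t I))
local notation "vB" => QP.bv k s t I
local notation "vBF" => QP.bv k (Sum.elim s sF) (Sum.elim t tF) (QP.idealF k s t sF tF I)
local notation "aB" => ba k s t I
local notation "aBF" => ba k (Sum.elim s sF) (Sum.elim t tF) (QP.idealF k s t sF tF I)

noncomputable example : Ring EE := inferInstance
noncomputable example : Algebra k EE := inferInstance

/-- values of ψ on generators -/
noncomputable def psi0 : V ⊕ (E ⊕ F) → EE
  | .inl i => .inl (vBF i, vB i)
  | .inr (.inl e) => .inl (aBF (Sum.inl e), aB e)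
  | .inr (.inr a) => .inl (aBF (Sum.inr a), 0)
      + .inr ((aBF (Sum.inr a)) ⊗ₜ[k] vB (sF a))

noncomputable def psiFree : FreeAlgebra k (V ⊕ (E ⊕ F)) →ₐ[k] EE :=
  FreeAlgebra.lift k (psi0 k s t sF tF I)

end Psi
section Psi2
variable (k : Type) [Field k]
variable {V E : Type} [Fintype V] [DecidableEq V] [Fintype E] (s t : E → V)
variable {F : Type} [Fintype F] (sF tF : F → V)
variable (I : TwoSidedIdeal (QP.PathAlg k V E s t))

local notation "B" => QP.BQA k s t I
local notation "BF" => QP.BQAF k s t sF tF I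
local notation "EE" => TrivSqZeroExt ((QP.BQAF k s t sF tF I) × (QP.BQA k s t I))
  ((QP.BQAF k s t sF tF I) ⊗[k] (QP.BQA k s t I))
local notation "vB" => QP.bv k s t I
local notation "vBF" => QP.bv k (Sum.elim s sF) (Sum.elim t tF) (QP.idealF k s t sF tF I)
local notation "aB" => ba k s t I
local notation "aBF" => ba k (Sum.elim s sF) (Sum.elim t tF) (QP.idealF k s t sF tF I)

lemma psiFree_rel :
    ∀ ⦃x y : FreeAlgebra k (V ⊕ (E ⊕ F))⦄,
      QP.PRel k V (E ⊕ F) (Sum.elim s sF) (Sum.elim t tF) x y →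
      psiFree k s t sF tF I x = psiFree k s t sF tF I y := by
  intro x y h
  induction h with
  | idem i j =>
      rw [map_mul, apply_ite (psiFree k s t sF tF I), map_zero]
      simp only [psiFree, FreeAlgebra.lift_ι_apply, psi0]
      rw [TrivSqZeroExt.inl_mul_inl, Prod.mk_mul_mk, bv_mul_bv, bv_mul_bv]
      split_ifs <;> rfl
  | unit =>
      rw [map_sum, map_one]
      simp only [psiFree, FreeAlgebra.lift_ι_apply, psi0]
      have h1 : ∀ i : V, (TrivSqZeroExt.inl ((vBF i, vB i) : BF × B) : EE)
          = TrivSqZeroExt.inlHom (BF × B) _ (vBF i, vB i) := fun _ => rfl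
      simp only [h1]
      rw [← map_sum]
      have h2 : (∑ i, ((vBF i, vB i) : BF × B)) = 1 := by
        have : (∑ i, ((vBF i, vB i) : BF × B))
            = (∑ i, vBF i, ∑ i, vB i) := by
          ext <;> simp [Prod.fst_sum, Prod.snd_sum]
        rw [this, sum_bv, sum_bv]
        rfl
      rw [h2, map_one]
  | arrow_left a =>
      rw [map_mul]
      simp only [psiFree, FreeAlgebra.lift_ι_apply]
      cases a with
      | inl e =>
          simp only [psi0, Sum.elim_inl]
          rw [TrivSqZeroExt.inl_mul_inl, Prod.mk_mul_mk]
          have h1 := bv_mul_ba k (Sum.elim s sF) (Sum.elim t tF) (QP.idealF k s t sF tF I)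
            (Sum.inl e)
          simp only [Sum.elim_inl] at h1
          rw [h1, bv_mul_ba]
      | inr a =>
          simp only [psi0, Sum.elim_inr]
          have h1 := bv_mul_ba k (Sum.elim s sF) (Sum.elim t tF) (QP.idealF k s t sF tF I)
            (Sum.inr a)
          simp only [Sum.elim_inr] at h1
          rw [mul_add, TrivSqZeroExt.inl_mul_inl, Prod.mk_mul_mk, h1, mul_zero,
            TrivSqZeroExt.inl_mul_inr]
          have h2 : ((vBF (tF a), vB (tF a)) : BF × B)
                • ((aBF (Sum.inr a)) ⊗ₜ[k] (vB (sF a)))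
              = (aBF (Sum.inr a)) ⊗ₜ[k] (vB (sF a)) := by
            rw [prod_smul_def]
            show (vBF (tF a)) • ((aBF (Sum.inr a)) ⊗ₜ[k] (vB (sF a)))
                = (aBF (Sum.inr a)) ⊗ₜ[k] (vB (sF a))
            rw [TensorProduct.smul_tmul', smul_eq_mul, h1]
          rw [h2]
  | arrow_right a =>
      rw [map_mul]
      simp only [psiFree, FreeAlgebra.lift_ι_apply]
      cases a with
      | inl e =>
          simp only [psi0, Sum.elim_inl]
          rw [TrivSqZeroExt.inl_mul_inl, Prod.mk_mul_mk]
          have h1 := ba_mul_bv k (Sum.elim s sF) (Sum.elim t tF) (QP.idealF k s t sF tF I)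
            (Sum.inl e)
          simp only [Sum.elim_inl] at h1
          rw [h1, ba_mul_bv]
      | inr a =>
          simp only [psi0, Sum.elim_inr]
          have h1 := ba_mul_bv k (Sum.elim s sF) (Sum.elim t tF) (QP.idealF k s t sF tF I)
            (Sum.inr a)
          simp only [Sum.elim_inr] at h1
          rw [add_mul, TrivSqZeroExt.inl_mul_inl, Prod.mk_mul_mk, h1, zero_mul,
            TrivSqZeroExt.inr_mul_inl]
          have h2 : (MulOpposite.op ((vBF (sF a), vB (sF a)) : BF × B))
                • ((aBF (Sum.inr a)) ⊗ₜ[k] (vB (sF a)))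
              = (aBF (Sum.inr a)) ⊗ₜ[k] (vB (sF a)) := by
            rw [op_smul_def]
            show LinearMap.lTensor _ (LinearMap.mulRight k (vB (sF a)))
                ((aBF (Sum.inr a)) ⊗ₜ[k] (vB (sF a)))
                = (aBF (Sum.inr a)) ⊗ₜ[k] (vB (sF a))
            rw [LinearMap.lTensor_tmul, LinearMap.mulRight_apply, bv_mul_bv, if_pos rfl]
          rw [h2]

end Psi2
section Psi3
variable (k : Type) [Field k]
variable {V E : Type} [Fintype V] [DecidableEq V] [Fintype E] (s t : E → V)
variable {F : Type} [Fintype F] (sF tF : F → V)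
variable (I : TwoSidedIdeal (QP.PathAlg k V E s t))

local notation "B" => QP.BQA k s t I
local notation "BF" => QP.BQAF k s t sF tF I
local notation "EE" => TrivSqZeroExt ((QP.BQAF k s t sF tF I) × (QP.BQA k s t I))
  ((QP.BQAF k s t sF tF I) ⊗[k] (QP.BQA k s t I))
local notation "vB" => QP.bv k s t I
local notation "vBF" => QP.bv k (Sum.elim s sF) (Sum.elim t tF) (QP.idealF k s t sF tF I)
local notation "aB" => ba k s t I
local notation "aBF" => ba k (Sum.elim s sF) (Sum.elim t tF) (QP.idealF k s t sF tF I)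
local notation "incl" => QP.inclBF k s t sF tF I

/-- ψ on the path algebra of the extended quiver -/
noncomputable def psiPA :
    QP.PathAlg k V (E ⊕ F) (Sum.elim s sF) (Sum.elim t tF) →ₐ[k] EE :=
  RingQuot.liftAlgHom k ⟨psiFree k s t sF tF I, psiFree_rel k s t sF tF I⟩

lemma extendPath_vtx (i : V) :
    QP.extendPath k s t sF tF (QP.vtx k s t i)
      = QP.vtx k (Sum.elim s sF) (Sum.elim t tF) i := by
  unfold QP.extendPath QP.vtx
  rw [RingQuot.liftAlgHom_mkAlgHom_apply, FreeAlgebra.lift_ι_apply]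

lemma extendPath_arr (e : E) :
    QP.extendPath k s t sF tF (QP.arr k s t e)
      = QP.arr k (Sum.elim s sF) (Sum.elim t tF) (Sum.inl e) := by
  unfold QP.extendPath QP.arr
  rw [RingQuot.liftAlgHom_mkAlgHom_apply, FreeAlgebra.lift_ι_apply]

lemma incl_bv (i : V) : incl (vB i) = vBF i := by
  unfold QP.inclBF QP.bv QP.bqaMk
  exact (RingQuot.liftAlgHom_mkAlgHom_apply k _ _ _).trans (by rw [AlgHom.comp_apply, extendPath_vtx])

lemma incl_ba (e : E) : incl (aB e) = aBF (Sum.inl e) := by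
  unfold ba QP.inclBF QP.bqaMk
  exact (RingQuot.liftAlgHom_mkAlgHom_apply k _ _ _).trans (by rw [AlgHom.comp_apply, extendPath_arr])

lemma psiPA_extend (x : QP.PathAlg k V E s t) :
    psiPA k s t sF tF I (QP.extendPath k s t sF tF x)
      = TrivSqZeroExt.inl
          (QP.bqaMk k (Sum.elim s sF) (Sum.elim t tF) (QP.idealF k s t sF tF I)
              (QP.extendPath k s t sF tF x),
            QP.bqaMk k s t I x) := by
  have : (psiPA k s t sF tF I).comp (QP.extendPath k s t sF tF)
      = (TrivSqZeroExt.inlAlgHom k (BF × B) _).comp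
          (AlgHom.prod
            ((QP.bqaMk k (Sum.elim s sF) (Sum.elim t tF)
                (QP.idealF k s t sF tF I)).comp (QP.extendPath k s t sF tF))
            (QP.bqaMk k s t I)) := by
    apply RingQuot.ringQuot_ext'
    apply FreeAlgebra.hom_ext
    funext z
    simp only [Function.comp_apply, AlgHom.comp_apply]
    have hprod : ∀ w : QP.PathAlg k V E s t,
        (AlgHom.prod
            ((QP.bqaMk k (Sum.elim s sF) (Sum.elim t tF)
                (QP.idealF k s t sF tF I)).comp (QP.extendPath k s t sF tF))
            (QP.bqaMk k s t I)) w
          = (QP.bqaMk k (Sum.elim s sF) (Sum.elim t tF) (QP.idealF k s t sF tF I)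
              (QP.extendPath k s t sF tF w), QP.bqaMk k s t I w) := fun _ => rfl
    cases z with
    | inl i =>
        rw [show RingQuot.mkAlgHom k (QP.PRel k V E s t) (FreeAlgebra.ι k (Sum.inl i))
            = QP.vtx k s t i from rfl, hprod, extendPath_vtx]
        unfold psiPA QP.vtx
        rw [RingQuot.liftAlgHom_mkAlgHom_apply]
        unfold psiFree
        rw [FreeAlgebra.lift_ι_apply]
        rfl
    | inr e =>
        rw [show RingQuot.mkAlgHom k (QP.PRel k V E s t) (FreeAlgebra.ι k (Sum.inr e))
            = QP.arr k s t e from rfl, hprod, extendPath_arr]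
        unfold psiPA QP.arr
        rw [RingQuot.liftAlgHom_mkAlgHom_apply]
        unfold psiFree
        rw [FreeAlgebra.lift_ι_apply]
        rfl
  exact AlgHom.congr_fun this x

lemma psiPA_ideal :
    ∀ ⦃x y : QP.PathAlg k V (E ⊕ F) (Sum.elim s sF) (Sum.elim t tF)⦄,
      x - y ∈ QP.idealF k s t sF tF I → psiPA k s t sF tF I x = psiPA k s t sF tF I y := by
  have key : ∀ z ∈ QP.idealF k s t sF tF I, psiPA k s t sF tF I z = 0 := by
    intro z hz
    have : z ∈ TwoSidedIdeal.ker (psiPA k s t sF tF I) := by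
      refine TwoSidedIdeal.mem_span_iff.mp hz _ ?_
      rintro w ⟨x, hx, rfl⟩
      rw [SetLike.mem_coe, TwoSidedIdeal.mem_ker, psiPA_extend]
      have h1 : QP.bqaMk k s t I x = 0 := bqaMk_eq_zero k s t I hx
      have h2 : QP.bqaMk k (Sum.elim s sF) (Sum.elim t tF) (QP.idealF k s t sF tF I)
          (QP.extendPath k s t sF tF x) = 0 := by
        apply bqaMk_eq_zero
        exact TwoSidedIdeal.subset_span ⟨x, hx, rfl⟩
      rw [h1, h2]
      exact TrivSqZeroExt.inl_zero _
    rwa [TwoSidedIdeal.mem_ker] at this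
  intro x y h
  have := key _ h
  rw [map_sub, sub_eq_zero] at this
  exact this

/-- The algebra morphism ψ : B_F →ₐ E encoding the projection and the homotopy. -/
noncomputable def psiBF : QP.BQAF k s t sF tF I →ₐ[k] EE :=
  RingQuot.liftAlgHom k ⟨psiPA k s t sF tF I, psiPA_ideal k s t sF tF I⟩

end Psi3
section Psi4
variable (k : Type) [Field k]
variable {V E : Type} [Fintype V] [DecidableEq V] [Fintype E] (s t : E → V)
variable {F : Type} [Fintype F] (sF tF : F → V)
variable (I : TwoSidedIdeal (QP.PathAlg k V E s t))

local notation "B" => QP.BQA k s t I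
local notation "BF" => QP.BQAF k s t sF tF I
local notation "NN" => (QP.BQAF k s t sF tF I) ⊗[k] (QP.BQA k s t I)
local notation "EE" => TrivSqZeroExt ((QP.BQAF k s t sF tF I) × (QP.BQA k s t I))
  ((QP.BQAF k s t sF tF I) ⊗[k] (QP.BQA k s t I))
local notation "vB" => QP.bv k s t I
local notation "vBF" => QP.bv k (Sum.elim s sF) (Sum.elim t tF) (QP.idealF k s t sF tF I)
local notation "aB" => ba k s t I
local notation "aBF" => ba k (Sum.elim s sF) (Sum.elim t tF) (QP.idealF k s t sF tF I)
local notation "incl" => QP.inclBF k s t sF tF I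

lemma psiBF_gen (x : V ⊕ (E ⊕ F)) :
    psiBF k s t sF tF I
        (QP.bqaMk k (Sum.elim s sF) (Sum.elim t tF) (QP.idealF k s t sF tF I)
          (RingQuot.mkAlgHom k (QP.PRel k V (E ⊕ F) (Sum.elim s sF) (Sum.elim t tF))
            (FreeAlgebra.ι k x)))
      = psi0 k s t sF tF I x := by
  unfold psiBF QP.bqaMk
  rw [RingQuot.liftAlgHom_mkAlgHom_apply]
  unfold psiPA
  rw [RingQuot.liftAlgHom_mkAlgHom_apply]
  unfold psiFree
  rw [FreeAlgebra.lift_ι_apply]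

lemma psiBF_bv (i : V) :
    psiBF k s t sF tF I (vBF i) = TrivSqZeroExt.inl (vBF i, vB i) :=
  psiBF_gen k s t sF tF I (Sum.inl i)

lemma psiBF_olda (e : E) :
    psiBF k s t sF tF I (aBF (Sum.inl e))
      = TrivSqZeroExt.inl (aBF (Sum.inl e), aB e) :=
  psiBF_gen k s t sF tF I (Sum.inr (Sum.inl e))

lemma psiBF_newa (a : F) :
    psiBF k s t sF tF I (aBF (Sum.inr a))
      = TrivSqZeroExt.inl (aBF (Sum.inr a), 0)
        + TrivSqZeroExt.inr ((aBF (Sum.inr a)) ⊗ₜ[k] vB (sF a)) :=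
  psiBF_gen k s t sF tF I (Sum.inr (Sum.inr a))

/-- the retraction B_F → B -/
noncomputable def rr : QP.BQAF k s t sF tF I →ₐ[k] QP.BQA k s t I :=
  (AlgHom.snd k BF B).comp
    ((TrivSqZeroExt.fstHom k (BF × B) NN).comp (psiBF k s t sF tF I))

/-- the homotopy component Φ -/
noncomputable def Phi : QP.BQAF k s t sF tF I →ₗ[k] NN :=
  { toFun := fun y => TrivSqZeroExt.snd (psiBF k s t sF tF I y)
    map_add' := fun x y => by
      show TrivSqZeroExt.snd (psiBF k s t sF tF I (x + y)) = _
      rw [map_add, TrivSqZeroExt.snd_add]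
    map_smul' := fun c x => by
      show TrivSqZeroExt.snd (psiBF k s t sF tF I (c • x))
        = (RingHom.id k) c • TrivSqZeroExt.snd (psiBF k s t sF tF I x)
      rw [map_smul, TrivSqZeroExt.snd_smul]
      rfl }

lemma theta_eq :
    (AlgHom.fst k BF B).comp
        ((TrivSqZeroExt.fstHom k (BF × B) NN).comp (psiBF k s t sF tF I))
      = AlgHom.id k BF := by
  apply bqa_hom_ext
  · intro i
    simp only [AlgHom.comp_apply, AlgHom.id_apply]
    rw [show QP.bv k (Sum.elim s sF) (Sum.elim t tF) (QP.idealF k s t sF tF I) i = vBF i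
      from rfl, psiBF_bv]
    rfl
  · intro e
    simp only [AlgHom.comp_apply, AlgHom.id_apply]
    cases e with
    | inl e => rw [psiBF_olda]; rfl
    | inr a =>
        rw [psiBF_newa]
        show (TrivSqZeroExt.inl ((aBF (Sum.inr a), 0) : BF × B)
            + TrivSqZeroExt.inr ((aBF (Sum.inr a)) ⊗ₜ[k] vB (sF a))).fst.1
          = aBF (Sum.inr a)
        rw [TrivSqZeroExt.fst_add, TrivSqZeroExt.fst_inl, TrivSqZeroExt.fst_inr, add_zero]

lemma psi_fst (y : QP.BQAF k s t sF tF I) :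
    TrivSqZeroExt.fst (psiBF k s t sF tF I y) = (y, rr k s t sF tF I y) := by
  have h1 : (TrivSqZeroExt.fst (psiBF k s t sF tF I y)).1 = y := by
    have := AlgHom.congr_fun (theta_eq k s t sF tF I) y
    simpa using this
  have h2 : (TrivSqZeroExt.fst (psiBF k s t sF tF I y)).2 = rr k s t sF tF I y := rfl
  rw [Prod.ext_iff]
  exact ⟨h1, h2⟩

lemma rr_incl (b : QP.BQA k s t I) : rr k s t sF tF I (incl b) = b := by
  have : (rr k s t sF tF I).comp (QP.inclBF k s t sF tF I) = AlgHom.id k B := by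
    apply bqa_hom_ext
    · intro i
      simp only [AlgHom.comp_apply, AlgHom.id_apply]
      rw [incl_bv]
      unfold rr
      simp only [AlgHom.comp_apply]
      rw [psiBF_bv]
      rfl
    · intro e
      simp only [AlgHom.comp_apply, AlgHom.id_apply]
      rw [incl_ba]
      unfold rr
      simp only [AlgHom.comp_apply]
      rw [psiBF_olda]
      rfl
  exact AlgHom.congr_fun this b

lemma Phi_incl (b : QP.BQA k s t I) : Phi k s t sF tF I (incl b) = 0 := by
  have : (psiBF k s t sF tF I).comp (QP.inclBF k s t sF tF I)
      = (TrivSqZeroExt.inlAlgHom k (BF × B) NN).comp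
          (AlgHom.prod (QP.inclBF k s t sF tF I) (AlgHom.id k B)) := by
    apply bqa_hom_ext
    · intro i
      simp only [AlgHom.comp_apply, AlgHom.id_apply]
      rw [incl_bv, psiBF_bv]
      show TrivSqZeroExt.inl ((vBF i, vB i) : BF × B)
        = TrivSqZeroExt.inl ((incl (vB i), vB i) : BF × B)
      rw [incl_bv]
    · intro e
      simp only [AlgHom.comp_apply, AlgHom.id_apply]
      rw [incl_ba, psiBF_olda]
      show TrivSqZeroExt.inl ((aBF (Sum.inl e), aB e) : BF × B)
        = TrivSqZeroExt.inl ((incl (aB e), aB e) : BF × B)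
      rw [incl_ba]
  show TrivSqZeroExt.snd (psiBF k s t sF tF I (incl b)) = 0
  rw [show psiBF k s t sF tF I (incl b)
      = ((psiBF k s t sF tF I).comp (QP.inclBF k s t sF tF I)) b from rfl, this]
  show TrivSqZeroExt.snd ((TrivSqZeroExt.inl
      ((incl b, (AlgHom.id k B) b) : BF × B) :
        TrivSqZeroExt ((QP.BQAF k s t sF tF I) × (QP.BQA k s t I))
          ((QP.BQAF k s t sF tF I) ⊗[k] (QP.BQA k s t I)))) = 0
  rfl

lemma Phi_mul (x y : QP.BQAF k s t sF tF I) :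
    Phi k s t sF tF I (x * y)
      = x • Phi k s t sF tF I y
        + LinearMap.lTensor BF (LinearMap.mulRight k (rr k s t sF tF I y))
            (Phi k s t sF tF I x) := by
  show TrivSqZeroExt.snd (psiBF k s t sF tF I (x * y)) = _
  rw [map_mul, TrivSqZeroExt.snd_mul, psi_fst, psi_fst]
  rfl

end Psi4
section Psi5
variable (k : Type) [Field k]
variable {V E : Type} [Fintype V] [DecidableEq V] [Fintype E] (s t : E → V)
variable {F : Type} [Fintype F] (sF tF : F → V)
variable (I : TwoSidedIdeal (QP.PathAlg k V E s t))

local notation "B" => QP.BQA k s t I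
local notation "BF" => QP.BQAF k s t sF tF I
local notation "NN" => (QP.BQAF k s t sF tF I) ⊗[k] (QP.BQA k s t I)
local notation "vB" => QP.bv k s t I
local notation "vBF" => QP.bv k (Sum.elim s sF) (Sum.elim t tF) (QP.idealF k s t sF tF I)
local notation "aB" => ba k s t I
local notation "aBF" => ba k (Sum.elim s sF) (Sum.elim t tF) (QP.idealF k s t sF tF I)
local notation "incl" => QP.inclBF k s t sF tF I

/-- multiplication map B_F ⊗ B → B_F -/
noncomputable def mu : ((QP.BQAF k s t sF tF I) ⊗[k] (QP.BQA k s t I)) →ₗ[k]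
    QP.BQAF k s t sF tF I :=
  (LinearMap.mul' k (QP.BQAF k s t sF tF I)).comp
    (LinearMap.lTensor (QP.BQAF k s t sF tF I) (QP.inclBF k s t sF tF I).toLinearMap)

lemma mu_tmul (y : QP.BQAF k s t sF tF I) (b : QP.BQA k s t I) :
    mu k s t sF tF I (y ⊗ₜ[k] b) = y * incl b := by
  simp [mu, LinearMap.mul'_apply]

lemma mu_smul (x : QP.BQAF k s t sF tF I) (n : NN) :
    mu k s t sF tF I (x • n) = x * mu k s t sF tF I n := by
  induction n using TensorProduct.induction_on with
  | zero => simp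
  | tmul y b => rw [TensorProduct.smul_tmul', mu_tmul, mu_tmul, smul_eq_mul, mul_assoc]
  | add m n hm hn => rw [smul_add, map_add, hm, hn, map_add, mul_add]

lemma mu_lt (c : QP.BQA k s t I) (n : NN) :
    mu k s t sF tF I (LinearMap.lTensor _ (LinearMap.mulRight k c) n)
      = mu k s t sF tF I n * incl c := by
  induction n using TensorProduct.induction_on with
  | zero => simp
  | tmul y b =>
      rw [LinearMap.lTensor_tmul, LinearMap.mulRight_apply, mu_tmul, mu_tmul, map_mul,
        mul_assoc]
  | add m n hm hn => rw [map_add, map_add, hm, hn, map_add, add_mul]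

lemma mu_Phi (y : QP.BQAF k s t sF tF I) :
    mu k s t sF tF I (Phi k s t sF tF I y) = y - incl (rr k s t sF tF I y) := by
  obtain ⟨p, rfl⟩ := RingQuot.mkAlgHom_surjective k _ y
  obtain ⟨q, rfl⟩ := RingQuot.mkAlgHom_surjective k _ p
  induction q using FreeAlgebra.induction with
  | grade0 c =>
      rw [AlgHom.commutes, AlgHom.commutes]
      have hPhi : Phi k s t sF tF I (algebraMap k _ c) = 0 := by
        show TrivSqZeroExt.snd (psiBF k s t sF tF I (algebraMap k _ c)) = 0
        rw [AlgHom.commutes]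
        rfl
      rw [hPhi, map_zero, AlgHom.commutes, AlgHom.commutes, sub_self]
  | grade1 x =>
      cases x with
      | inl i =>
          show mu k s t sF tF I (Phi k s t sF tF I (vBF i))
            = vBF i - incl (rr k s t sF tF I (vBF i))
          have hPhi : Phi k s t sF tF I (vBF i) = 0 := by
            show TrivSqZeroExt.snd (psiBF k s t sF tF I (vBF i)) = 0
            rw [psiBF_bv]
            rfl
          have hrr : rr k s t sF tF I (vBF i) = vB i := by
            unfold rr
            simp only [AlgHom.comp_apply]
            rw [psiBF_bv]
            rfl
          rw [hPhi, map_zero, hrr, incl_bv, sub_self]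
      | inr x =>
          cases x with
          | inl e =>
              show mu k s t sF tF I (Phi k s t sF tF I (aBF (Sum.inl e)))
                = aBF (Sum.inl e) - incl (rr k s t sF tF I (aBF (Sum.inl e)))
              have hPhi : Phi k s t sF tF I (aBF (Sum.inl e)) = 0 := by
                show TrivSqZeroExt.snd (psiBF k s t sF tF I (aBF (Sum.inl e))) = 0
                rw [psiBF_olda]
                rfl
              have hrr : rr k s t sF tF I (aBF (Sum.inl e)) = aB e := by
                unfold rr
                simp only [AlgHom.comp_apply]
                rw [psiBF_olda]
                rfl
              rw [hPhi, map_zero, hrr, incl_ba, sub_self]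
          | inr a =>
              show mu k s t sF tF I (Phi k s t sF tF I (aBF (Sum.inr a)))
                = aBF (Sum.inr a) - incl (rr k s t sF tF I (aBF (Sum.inr a)))
              have hPhi : Phi k s t sF tF I (aBF (Sum.inr a))
                  = (aBF (Sum.inr a)) ⊗ₜ[k] vB (sF a) := by
                show TrivSqZeroExt.snd (psiBF k s t sF tF I (aBF (Sum.inr a))) = _
                rw [psiBF_newa, TrivSqZeroExt.snd_add, TrivSqZeroExt.snd_inl,
                  TrivSqZeroExt.snd_inr, zero_add]
              have hrr : rr k s t sF tF I (aBF (Sum.inr a)) = 0 := by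
                unfold rr
                simp only [AlgHom.comp_apply, psiBF_newa, TrivSqZeroExt.fstHom_apply,
                  TrivSqZeroExt.fst_add, TrivSqZeroExt.fst_inl, TrivSqZeroExt.fst_inr,
                  add_zero]
                rfl
              rw [hPhi, hrr, map_zero, sub_zero, mu_tmul, incl_bv]
              have := ba_mul_bv k (Sum.elim s sF) (Sum.elim t tF)
                (QP.idealF k s t sF tF I) (Sum.inr a)
              simpa using this
  | mul x y hx hy =>
      rw [map_mul, map_mul, Phi_mul, map_add, mu_smul, mu_lt, hx, hy, map_mul, map_mul]
      rw [mul_sub, sub_mul]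
      abel
  | add x y hx hy =>
      rw [map_add, map_add, map_add, map_add, map_add, map_add, hx, hy]
      abel

lemma Phi_left (b : QP.BQA k s t I) (y : QP.BQAF k s t sF tF I) :
    Phi k s t sF tF I (incl b * y) = incl b • Phi k s t sF tF I y := by
  rw [Phi_mul, Phi_incl, map_zero, add_zero]

lemma Phi_right (y : QP.BQAF k s t sF tF I) (c : QP.BQA k s t I) :
    Phi k s t sF tF I (y * incl c)
      = LinearMap.lTensor _ (LinearMap.mulRight k c) (Phi k s t sF tF I y) := by
  rw [Phi_mul, rr_incl, Phi_incl, smul_zero, zero_add]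

end Psi5
section Chain
variable (k : Type) [Field k]
variable {V E : Type} [Fintype V] [DecidableEq V] [Fintype E] (s t : E → V)
variable {F : Type} [Fintype F] (sF tF : F → V)
variable (I : TwoSidedIdeal (QP.PathAlg k V E s t))

local notation "B" => QP.BQA k s t I
local notation "BF" => QP.BQAF k s t sF tF I
local notation "NN" => (QP.BQAF k s t sF tF I) ⊗[k] (QP.BQA k s t I)
local notation "incl" => QP.inclBF k s t sF tF I

/-- the retraction on chains -/
noncomputable def rho2 : ((QP.BQAF k s t sF tF I) ⊗[k] (QP.BQA k s t I)) →ₗ[k]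
    ((QP.BQA k s t I) ⊗[k] (QP.BQA k s t I)) :=
  TensorProduct.map (rr k s t sF tF I).toLinearMap LinearMap.id

lemma rho_d1 (z : NN) :
    HHlow.hb1 k B B (AlgHom.id k B) (rho2 k s t sF tF I z)
      = rr k s t sF tF I (HHlow.hb1 k BF BF incl z) := by
  induction z using TensorProduct.induction_on with
  | zero => simp
  | tmul y b =>
      rw [show rho2 k s t sF tF I (y ⊗ₜ[k] b) = (rr k s t sF tF I y) ⊗ₜ[k] b from rfl]
      rw [HHlow.hb1_tmul, HHlow.hb1_tmul]
      simp only [MulOpposite.smul_eq_mul_unop, MulOpposite.unop_op, smul_eq_mul,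
        AlgHom.id_apply, map_sub, map_mul, rr_incl]
  | add m n hm hn => simp only [map_add, hm, hn]

lemma rho_d2 (w : ((QP.BQAF k s t sF tF I) ⊗[k] (QP.BQA k s t I)) ⊗[k] (QP.BQA k s t I)) :
    rho2 k s t sF tF I (HHlow.hb2 k BF BF incl w)
      = HHlow.hb2 k B B (AlgHom.id k B)
          (LinearMap.rTensor (QP.BQA k s t I) (rho2 k s t sF tF I) w) := by
  induction w using TensorProduct.induction_on with
  | zero => simp
  | tmul n b' =>
      induction n using TensorProduct.induction_on with
      | zero => simp [TensorProduct.zero_tmul]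
      | tmul y b =>
          rw [LinearMap.rTensor_tmul,
            show rho2 k s t sF tF I (y ⊗ₜ[k] b) = (rr k s t sF tF I y) ⊗ₜ[k] b from rfl,
            HHlow.hb2_tmul, HHlow.hb2_tmul]
          simp only [MulOpposite.smul_eq_mul_unop, MulOpposite.unop_op, smul_eq_mul,
            AlgHom.id_apply, map_add, map_sub]
          rw [show rho2 k s t sF tF I ((y * incl b) ⊗ₜ[k] b')
              = (rr k s t sF tF I (y * incl b)) ⊗ₜ[k] b' from rfl,
            show rho2 k s t sF tF I (y ⊗ₜ[k] (b * b'))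
              = (rr k s t sF tF I y) ⊗ₜ[k] (b * b') from rfl,
            show rho2 k s t sF tF I ((incl b' * y) ⊗ₜ[k] b)
              = (rr k s t sF tF I (incl b' * y)) ⊗ₜ[k] b from rfl]
          rw [map_mul, map_mul, rr_incl, rr_incl]
      | add m n hm hn =>
          rw [TensorProduct.add_tmul]
          simp only [map_add, hm, hn]
  | add m n hm hn => simp only [map_add, hm, hn]

lemma aux2 (n : NN) (c : QP.BQA k s t I) :
    HHlow.hb2 k BF BF incl (n ⊗ₜ[k] c)
      = (mu k s t sF tF I n) ⊗ₜ[k] c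
        - LinearMap.lTensor _ (LinearMap.mulRight k c) n
        + incl c • n := by
  induction n using TensorProduct.induction_on with
  | zero => simp [TensorProduct.zero_tmul]
  | tmul y b =>
      rw [HHlow.hb2_tmul, mu_tmul, LinearMap.lTensor_tmul, LinearMap.mulRight_apply,
        TensorProduct.smul_tmul', MulOpposite.smul_eq_mul_unop, MulOpposite.unop_op,
        smul_eq_mul]
  | add m n hm hn =>
      rw [TensorProduct.add_tmul, map_add, hm, hn, map_add, TensorProduct.add_tmul,
        map_add, smul_add]
      abel

lemma key (z : NN) :
    HHlow.hb2 k BF BF incl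
        (LinearMap.rTensor (QP.BQA k s t I) (Phi k s t sF tF I) z)
      = z - TensorProduct.map ((incl).comp (rr k s t sF tF I)).toLinearMap LinearMap.id z
        - Phi k s t sF tF I (HHlow.hb1 k BF BF incl z) := by
  induction z using TensorProduct.induction_on with
  | zero => simp
  | tmul y c =>
      rw [LinearMap.rTensor_tmul, aux2, mu_Phi, ← Phi_right, ← Phi_left,
        HHlow.hb1_tmul, map_sub, TensorProduct.sub_tmul,
        show TensorProduct.map ((incl).comp (rr k s t sF tF I)).toLinearMap LinearMap.id
            (y ⊗ₜ[k] c) = (incl (rr k s t sF tF I y)) ⊗ₜ[k] c from rfl,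
        MulOpposite.smul_eq_mul_unop, MulOpposite.unop_op, smul_eq_mul]
      abel
  | add m n hm hn =>
      simp only [map_add, hm, hn]
      abel

lemma chain_rho (z : NN) :
    HHlow.chain1 k (QP.BQA k s t I) (QP.BQAF k s t sF tF I) (AlgHom.id k (QP.BQA k s t I))
        (QP.inclBF k s t sF tF I).toLinearMap (rho2 k s t sF tF I z)
      = TensorProduct.map ((incl).comp (rr k s t sF tF I)).toLinearMap LinearMap.id z := by
  induction z using TensorProduct.induction_on with
  | zero => simp
  | tmul y b => rfl
  | add m n hm hn => rw [map_add, map_add, hm, hn, map_add]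

lemma chain_rho' (z : (QP.BQA k s t I) ⊗[k] (QP.BQA k s t I)) :
    rho2 k s t sF tF I
        (HHlow.chain1 k (QP.BQA k s t I) (QP.BQAF k s t sF tF I)
          (AlgHom.id k (QP.BQA k s t I)) (QP.inclBF k s t sF tF I).toLinearMap z)
      = z := by
  induction z using TensorProduct.induction_on with
  | zero => simp
  | tmul y b =>
      rw [show HHlow.chain1 k (QP.BQA k s t I) (QP.BQAF k s t sF tF I)
          (AlgHom.id k (QP.BQA k s t I)) (QP.inclBF k s t sF tF I).toLinearMap (y ⊗ₜ[k] b)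
          = (incl y) ⊗ₜ[k] b from rfl,
        show rho2 k s t sF tF I ((incl y) ⊗ₜ[k] b)
          = (rr k s t sF tF I (incl y)) ⊗ₜ[k] b from rfl, rr_incl]
  | add m n hm hn => rw [map_add, map_add, hm, hn]

end Chain
section
variable (k : Type) [Field k]
variable {V E : Type} [Fintype V] [DecidableEq V] [Fintype E] (s t : E → V)
variable {F : Type} [Fintype F] (sF tF : F → V)
variable (I : TwoSidedIdeal (QP.PathAlg k V E s t))

theorem H1_homology_coefficient_extension_bijective (hI : QP.IsAdmissible k s t I) (hnc : QP.NoRelCycles k s t sF tF I) :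
    Function.Bijective
      (HHlow.H1hMap k (QP.BQA k s t I) (QP.BQA k s t I)
        (QP.BQAF k s t sF tF I) (QP.BQAF k s t sF tF I)
        (AlgHom.id k (QP.BQA k s t I)) (QP.inclBF k s t sF tF I)
        (AlgHom.id k (QP.BQA k s t I)) (QP.inclBF k s t sF tF I).toLinearMap
        (by intro b y; simp [smul_eq_mul, map_mul])
        (by intro b y; simp [MulOpposite.smul_eq_mul_unop, map_mul])) := by
  constructor
  · rw [injective_iff_map_eq_zero]
    intro x hx
    obtain ⟨z, rfl⟩ := Submodule.Quotient.mk_surjective _ x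
    unfold HHlow.H1hMap at hx
    erw [Submodule.mapQ_apply, Submodule.Quotient.mk_eq_zero] at hx
    rw [Submodule.mem_comap] at hx
    erw [Submodule.Quotient.mk_eq_zero, Submodule.mem_comap]
    obtain ⟨w, hw⟩ := hx
    refine ⟨LinearMap.rTensor _ (rho2 k s t sF tF I) w, ?_⟩
    have h2 := rho_d2 k s t sF tF I w
    rw [hw] at h2
    rw [← h2]
    exact chain_rho' k s t sF tF I z.1
  · intro c
    obtain ⟨z', rfl⟩ := Submodule.Quotient.mk_surjective _ c
    have hz' : HHlow.hb1 k (QP.BQAF k s t sF tF I) (QP.BQAF k s t sF tF I)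
        (QP.inclBF k s t sF tF I) (z' : _) = 0 := z'.2
    have hker : HHlow.hb1 k (QP.BQA k s t I) (QP.BQA k s t I) (AlgHom.id k (QP.BQA k s t I))
        (rho2 k s t sF tF I z'.1) = 0 := by
      rw [rho_d1, hz', map_zero]
    refine ⟨Submodule.Quotient.mk ⟨rho2 k s t sF tF I z'.1, hker⟩, ?_⟩
    unfold HHlow.H1hMap
    erw [Submodule.mapQ_apply, Submodule.Quotient.eq]
    rw [Submodule.mem_comap]
    refine ⟨-(LinearMap.rTensor _ (Phi k s t sF tF I) z'.1), ?_⟩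
    have hk := key k s t sF tF I z'.1
    rw [hz', map_zero, sub_zero] at hk
    refine (map_neg (HHlow.hb2 k (QP.BQAF k s t sF tF I) (QP.BQAF k s t sF tF I)
      (QP.inclBF k s t sF tF I)) (LinearMap.rTensor _ (Phi k s t sF tF I) z'.1)).trans ?_
    refine (congrArg Neg.neg hk).trans ?_
    refine (neg_sub _ _).trans ?_
    show TensorProduct.map ((QP.inclBF k s t sF tF I).comp (rr k s t sF tF I)).toLinearMap
          LinearMap.id z'.1 - z'.1
        = HHlow.chain1 k (QP.BQA k s t I) (QP.BQAF k s t sF tF I)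
            (AlgHom.id k (QP.BQA k s t I)) (QP.inclBF k s t sF tF I).toLinearMap
            (rho2 k s t sF tF I z'.1) - z'.1
    rw [chain_rho]

end
end
end
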